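/- arXiv:1507.07860 — 4 statements merged into one kernel-verified Lean document; each statement's English description precedes it below -/
import Mathlib

section
/- Let A be an n×n irreducible nonnegative real matrix with period 1 (aperiodic), and let B be a real matrix. Then |B| = A and sp(B) = −sp(A) (the multiset of negatives of the eigenvalues of A) if and only if B is {−1,1}-diagonally similar to −A. -/
open Matrix

/-- The spectrum of a real square matrix: the multiset of complex roots of its
characteristic polynomial (eigenvalues with multiplicity). -/
noncomputable def spec {ι : Type*} [Fintype ι] [DecidableEq ι] (M : Matrix ι ι ℝ) : Multiset ℂ :=
  (M.map Complex.ofReal).charpoly.roots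

/-- The spectral radius: the maximum of the moduli of the complex eigenvalues. -/
noncomputable def specRadius {ι : Type*} [Fintype ι] [DecidableEq ι] (M : Matrix ι ι ℝ) : ℝ :=
  sSup ((fun z : ℂ => ‖z‖) '' {z | z ∈ spec M})

/-- Entrywise absolute value of a real matrix. -/
def matAbs {ι : Type*} (M : Matrix ι ι ℝ) : Matrix ι ι ℝ := fun i j => |M i j|

/-- A walk of length `k` from `i` to `j` in the digraph of `A`
(arcs are the pairs with nonzero entry). -/
def HasWalk {ι : Type*} (A : Matrix ι ι ℝ) (i j : ι) (k : ℕ) : Prop :=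
  ∃ f : ℕ → ι, f 0 = i ∧ f k = j ∧ ∀ t < k, A (f t) (f (t + 1)) ≠ 0

/-- `A` is irreducible: its digraph is strongly connected. -/
def MatIrreducible {ι : Type*} (A : Matrix ι ι ℝ) : Prop :=
  ∀ i j : ι, ∃ k, HasWalk A i j k

/-- `p` is the period of `A`: the gcd of the lengths of the closed walks of its digraph. -/
def IsPeriod {ι : Type*} (A : Matrix ι ι ℝ) (p : ℕ) : Prop :=
  (∀ k, 0 < k → (∃ i, HasWalk A i i k) → p ∣ k) ∧
  ∀ q : ℕ, (∀ k, 0 < k → (∃ i, HasWalk A i i k) → q ∣ k) → q ∣ p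

/-- `B'` is `{-1,1}`-diagonally similar to `B`:
`B' = Λ⁻¹ * B * Λ` for a diagonal matrix `Λ` with diagonal entries in `{-1,1}`. -/
def DiagSignSimilar {ι : Type*} [Fintype ι] [DecidableEq ι] (B B' : Matrix ι ι ℝ) : Prop :=
  ∃ d : ι → ℝ, (∀ i, d i = 1 ∨ d i = -1) ∧
    B' = (Matrix.diagonal d)⁻¹ * B * Matrix.diagonal d

/- ### Auxiliary material -/

open Polynomial

section SpectralAux

variable {ι : Type*} [Fintype ι] [DecidableEq ι]

lemma aux_multiset_prod_swap {α β M : Type*} [CommMonoid M] (s : Multiset α) (t : Finset β)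
    (f : β → α → M) :
    (s.map fun a => ∏ c ∈ t, f c a).prod = ∏ c ∈ t, (s.map (f c)).prod := by
  classical
  induction t using Finset.induction with
  | empty => simp
  | @insert a t ha ih =>
      rw [Finset.prod_insert ha, ← ih, ← Multiset.prod_map_mul]
      congr 1
      exact Multiset.map_congr rfl fun x _ => by rw [Finset.prod_insert ha]

lemma aux_charpoly_eval (M : Matrix ι ι ℂ) (x : ℂ) :
    M.charpoly.eval x = (x • (1 : Matrix ι ι ℂ) - M).det := by
  rw [Matrix.charpoly, ← Polynomial.coe_evalRingHom, RingHom.map_det]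
  congr 1
  ext i j
  by_cases h : i = j
  · subst h; simp [charmatrix_apply_eq, Matrix.one_apply]
  · simp [charmatrix_apply_ne _ _ _ h, Matrix.one_apply, h]

lemma aux_roots_card_eq (M : Matrix ι ι ℂ) :
    Multiset.card M.charpoly.roots = Fintype.card ι := by
  have h := (IsAlgClosed.splits M.charpoly).eq_prod_roots_of_monic M.charpoly_monic
  have h2 := congrArg natDegree h
  rw [charpoly_natDegree_eq_dim, natDegree_multiset_prod_X_sub_C_eq_card] at h2
  exact h2.symm

lemma aux_det_smul_sub (M : Matrix ι ι ℂ) {c : ℂ} (hc : c ≠ 0) (x : ℂ) :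
    (x • (1 : Matrix ι ι ℂ) - c • M).det
      = (M.charpoly.roots.map fun μ => x - c * μ).prod := by
  have h1 : x • (1 : Matrix ι ι ℂ) - c • M = c • ((c⁻¹ * x) • (1 : Matrix ι ι ℂ) - M) := by
    rw [smul_sub, smul_smul, mul_inv_cancel_left₀ hc]
  rw [h1, Matrix.det_smul, ← aux_charpoly_eval]
  nth_rewrite 1 [(IsAlgClosed.splits M.charpoly).eq_prod_roots_of_monic M.charpoly_monic
    ]
  rw [eval_multiset_prod, Multiset.map_map, ← aux_roots_card_eq M]
  rw [← Multiset.prod_replicate, ← Multiset.map_const', ← Multiset.prod_map_mul]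
  congr 1
  refine Multiset.map_congr rfl fun μ _ => ?_
  simp only [Function.comp_apply, eval_sub, eval_X, eval_C]
  rw [mul_sub, mul_inv_cancel_left₀ hc]

lemma aux_det_list_prod (l : List (Matrix ι ι ℂ)) : l.prod.det = (l.map Matrix.det).prod := by
  induction l with
  | nil => simp
  | cons a l ih => simp [Matrix.det_mul, ih]

lemma aux_charpoly_pow_roots (M : Matrix ι ι ℂ) {k : ℕ} (hk : 0 < k) :
    (M ^ k).charpoly.roots = M.charpoly.roots.map (· ^ k) := by
  have hζ := Complex.isPrimitiveRoot_exp k hk.ne'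
  have hq : (M ^ k).charpoly
      = ((M.charpoly.roots.map (· ^ k)).map fun a => X - C a).prod := by
    apply Polynomial.funext
    intro y
    obtain ⟨x, rfl⟩ := IsAlgClosed.exists_pow_nat_eq y hk
    have hpoly : (C (x ^ k) - X ^ k : ℂ[X])
        = (((nthRootsFinset k (1 : ℂ)).toList.map fun c => C x - C c * X)).prod := by
      rw [Finset.prod_map_toList]
      apply Polynomial.funext; intro b
      simp only [eval_sub, eval_prod, eval_C, eval_pow, eval_X, eval_mul]
      exact hζ.pow_sub_pow_eq_prod_sub_mul x b hk
    have hmat : (x ^ k) • (1 : Matrix ι ι ℂ) - M ^ k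
        = (((nthRootsFinset k (1 : ℂ)).toList.map
            fun c => x • (1 : Matrix ι ι ℂ) - c • M)).prod := by
      have h := congrArg (Polynomial.aeval M) hpoly
      rw [map_list_prod, List.map_map] at h
      simpa only [map_sub, map_pow, _root_.map_mul, aeval_X, aeval_C, Function.comp_def,
        Algebra.algebraMap_eq_smul_one, smul_one_mul, _root_.smul_pow, one_pow] using h
    rw [aux_charpoly_eval, hmat, aux_det_list_prod, List.map_map]
    have hdet : ((nthRootsFinset k (1 : ℂ)).toList.map
          (Matrix.det ∘ fun c => x • (1 : Matrix ι ι ℂ) - c • M)).prod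
        = ((nthRootsFinset k (1 : ℂ)).toList.map
            fun c => (M.charpoly.roots.map fun μ => x - c * μ).prod).prod := by
      congr 1
      refine List.map_congr_left fun c hcmem => ?_
      have hcS : c ∈ nthRootsFinset k (1 : ℂ) := Finset.mem_toList.mp hcmem
      have hc : c ≠ 0 := fun h => by
        have := (mem_nthRootsFinset hk 1).mp hcS
        simp [h, zero_pow hk.ne'] at this
      exact aux_det_smul_sub M hc x
    rw [hdet, Finset.prod_map_toList, ← aux_multiset_prod_swap]
    rw [eval_multiset_prod, Multiset.map_map, Multiset.map_map]
    refine congrArg Multiset.prod (Multiset.map_congr rfl fun μ _ => ?_)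
    simp only [Function.comp_apply, eval_sub, eval_X, eval_C]
    exact (hζ.pow_sub_pow_eq_prod_sub_mul x μ hk).symm
  rw [hq, roots_multiset_prod_X_sub_C]

lemma aux_trace_pow_eq_sum (M : Matrix ι ι ℂ) {k : ℕ} (hk : 0 < k) :
    (M ^ k).trace = (M.charpoly.roots.map (· ^ k)).sum := by
  rw [trace_eq_sum_roots_charpoly, aux_charpoly_pow_roots M hk]

lemma aux_roots_charpoly_neg (M : Matrix ι ι ℂ) :
    (-M).charpoly.roots = M.charpoly.roots.map (fun z => -z) := by
  have hq : (-M).charpoly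
      = ((M.charpoly.roots.map (fun z : ℂ => -z)).map fun a => X - C a).prod := by
    apply Polynomial.funext
    intro x
    have h : -M = (-1 : ℂ) • M := by simp
    rw [aux_charpoly_eval, h, aux_det_smul_sub M (by norm_num : (-1 : ℂ) ≠ 0)]
    rw [eval_multiset_prod, Multiset.map_map, Multiset.map_map]
    refine congrArg Multiset.prod (Multiset.map_congr rfl fun μ _ => ?_)
    simp
  rw [hq, roots_multiset_prod_X_sub_C]

lemma aux_charpoly_conj (D Q : Matrix ι ι ℂ) (hD : D * D = 1) :
    (D * Q * D).charpoly = Q.charpoly := by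
  unfold Matrix.charpoly charmatrix
  set DC := (Polynomial.C : ℂ →+* ℂ[X]).mapMatrix D with hDCdef
  have hDC : DC * DC = 1 := by
    rw [hDCdef, ← _root_.map_mul, hD, _root_.map_one]
  have hcomm : Matrix.scalar ι (X : ℂ[X]) * DC = DC * Matrix.scalar ι (X : ℂ[X]) :=
    (Matrix.scalar_commute (X : ℂ[X]) (fun r' => mul_comm _ _) DC).eq
  have key : Matrix.scalar ι (X : ℂ[X]) - (Polynomial.C : ℂ →+* ℂ[X]).mapMatrix (D * Q * D)
      = DC * (Matrix.scalar ι (X : ℂ[X]) - (Polynomial.C : ℂ →+* ℂ[X]).mapMatrix Q) * DC := by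
    rw [mul_sub, sub_mul]
    congr 1
    · rw [← hcomm, mul_assoc, hDC, mul_one]
    · rw [_root_.map_mul, _root_.map_mul]
  rw [key, Matrix.det_mul, Matrix.det_mul]
  have : DC.det * (Matrix.scalar ι (X : ℂ[X]) -
        (Polynomial.C : ℂ →+* ℂ[X]).mapMatrix Q).det * DC.det
      = (DC * DC).det * (Matrix.scalar ι (X : ℂ[X]) -
        (Polynomial.C : ℂ →+* ℂ[X]).mapMatrix Q).det := by
    rw [Matrix.det_mul]; ring
  rw [this, hDC, Matrix.det_one, one_mul]

end SpectralAux

section SpecAux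

variable {n : ℕ}

lemma aux_map_ofReal_pow (P : Matrix (Fin n) (Fin n) ℝ) (k : ℕ) :
    (P.map Complex.ofReal) ^ k = (P ^ k).map Complex.ofReal := by
  have h := map_pow (Complex.ofRealHom.mapMatrix) P k
  simp only [RingHom.mapMatrix_apply] at h
  exact h.symm

lemma aux_trace_map_ofReal (Q : Matrix (Fin n) (Fin n) ℝ) :
    (Q.map Complex.ofReal).trace = ((Q.trace : ℝ) : ℂ) := by
  simp [Matrix.trace, Matrix.diag, Matrix.map_apply]

lemma aux_spec_pow_sum (P : Matrix (Fin n) (Fin n) ℝ) {k : ℕ} (hk : 0 < k) :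
    (((P ^ k).trace : ℝ) : ℂ) = ((spec P).map (· ^ k)).sum := by
  rw [← aux_trace_map_ofReal, ← aux_map_ofReal_pow, aux_trace_pow_eq_sum _ hk]
  rfl

lemma aux_trace_rel (A B : Matrix (Fin n) (Fin n) ℝ)
    (hspec : spec B = (spec A).map (fun z => -z)) :
    ∀ k, 0 < k → (B ^ k).trace = (-1)^k * (A ^ k).trace := by
  intro k hk
  have hB := aux_spec_pow_sum B hk
  have hA := aux_spec_pow_sum A hk
  rw [hspec, Multiset.map_map] at hB
  have h2 : ((spec A).map ((· ^ k) ∘ fun z => -z)).sum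
      = (-1:ℂ)^k * ((spec A).map (· ^ k)).sum := by
    rw [← Multiset.sum_map_mul_left]
    congr 1
    refine Multiset.map_congr rfl fun z _ => ?_
    simp only [Function.comp_apply]
    rw [neg_pow]
  rw [h2, ← hA] at hB
  have h3 : (((B ^ k).trace : ℝ) : ℂ) = ((((-1:ℝ))^k * (A ^ k).trace : ℝ) : ℂ) := by
    rw [hB]; push_cast; ring
  exact_mod_cast h3

lemma aux_spec_neg (P : Matrix (Fin n) (Fin n) ℝ) :
    spec (-P) = (spec P).map (fun z => -z) := by
  have h : (-P).map Complex.ofReal = -(P.map Complex.ofReal) := by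
    ext i j; simp [Matrix.map_apply]
  rw [spec, h, aux_roots_charpoly_neg]
  rfl

lemma aux_spec_conj (D P : Matrix (Fin n) (Fin n) ℝ) (hD : D * D = 1) :
    spec (D * P * D) = spec P := by
  have hmap : (D * P * D).map Complex.ofReal
      = (D.map Complex.ofReal) * (P.map Complex.ofReal) * (D.map Complex.ofReal) := by
    have h1 := congrArg (fun M => Complex.ofRealHom.mapMatrix M) (rfl : D * P * D = D * P * D)
    simp only [RingHom.mapMatrix_apply] at h1 ⊢
    rw [show (D * P * D).map Complex.ofReal = Complex.ofRealHom.mapMatrix (D * P * D) from rfl,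
      _root_.map_mul, _root_.map_mul]
    rfl
  have hDD : (D.map Complex.ofReal) * (D.map Complex.ofReal) = 1 := by
    rw [show (D.map Complex.ofReal) = Complex.ofRealHom.mapMatrix D from rfl,
      ← _root_.map_mul, hD, _root_.map_one]
  rw [spec, hmap, aux_charpoly_conj _ _ hDD]
  rfl

end SpecAux

section WalkAux

variable {ι : Type*} [Fintype ι] [DecidableEq ι]

lemma aux_pow_apply_walk (M : Matrix ι ι ℝ) : ∀ (k : ℕ) (i j : ι),
    (M ^ k) i j = ∑ g : Fin (k+1) → ι,
      (if g 0 = i ∧ g (Fin.last k) = j then ∏ t : Fin k, M (g t.castSucc) (g t.succ) else 0) := by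
  intro k
  induction k with
  | zero =>
      intro i j
      rw [pow_zero, Matrix.one_apply]
      rw [← ((Equiv.funUnique (Fin 1) ι).symm.sum_comp _)]
      simp only [Equiv.funUnique_symm_apply, Finset.univ_unique]
      by_cases hij : i = j
      · subst hij
        simp
      · rw [if_neg hij]
        symm
        refine Finset.sum_eq_zero fun a _ => ?_
        simp only [Fin.last_zero]
        rw [if_neg]
        rintro ⟨rfl, rfl⟩
        exact hij rfl
  | succ k ih =>
      intro i j
      rw [pow_succ, Matrix.mul_apply]
      rw [← ((Fin.snocEquiv (fun _ => ι)).sum_comp _)]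
      rw [Fintype.sum_prod_type]
      simp only [Fin.snocEquiv_apply]
      have hterm : ∀ (x : ι) (g' : Fin (k+1) → ι),
          (if (Fin.snoc g' x : Fin (k+2) → ι) 0 = i ∧
              (Fin.snoc g' x : Fin (k+2) → ι) (Fin.last (k+1)) = j then
            ∏ t : Fin (k+1), M ((Fin.snoc g' x : Fin (k+2) → ι) t.castSucc)
              ((Fin.snoc g' x : Fin (k+2) → ι) t.succ) else 0)
          = (if g' 0 = i ∧ x = j then
              (∏ t : Fin k, M (g' t.castSucc) (g' t.succ)) * M (g' (Fin.last k)) x else 0) := by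
        intro x g'
        have h0 : (Fin.snoc g' x : Fin (k+2) → ι) 0 = g' 0 := by
          rw [show (0 : Fin (k+2)) = Fin.castSucc 0 by simp, Fin.snoc_castSucc]
        have hlast : (Fin.snoc g' x : Fin (k+2) → ι) (Fin.last (k+1)) = x := Fin.snoc_last _ _
        have hprod : (∏ t : Fin (k+1), M ((Fin.snoc g' x : Fin (k+2) → ι) t.castSucc)
              ((Fin.snoc g' x : Fin (k+2) → ι) t.succ))
            = (∏ t : Fin k, M (g' t.castSucc) (g' t.succ)) * M (g' (Fin.last k)) x := by
          rw [Fin.prod_univ_castSucc]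
          congr 1
          · refine Finset.prod_congr rfl fun u _ => ?_
            rw [Fin.succ_castSucc, Fin.snoc_castSucc, Fin.snoc_castSucc]
          · rw [Fin.succ_last, Fin.snoc_last, Fin.snoc_castSucc]
        rw [h0, hlast, hprod]
      simp only [hterm]
      simp only [ih, Finset.sum_mul]
      rw [Finset.sum_comm]
      conv_rhs => rw [Finset.sum_comm]
      refine Finset.sum_congr rfl fun g' _ => ?_
      simp only [ite_mul, zero_mul]
      by_cases hgi : g' 0 = i
      · simp only [hgi, true_and]
        rw [Finset.sum_ite_eq Finset.univ (g' (Fin.last k))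
          (fun l => (∏ t : Fin k, M (g' t.castSucc) (g' t.succ)) * M l j)]
        rw [Finset.sum_ite_eq' Finset.univ j
          (fun x => (∏ t : Fin k, M (g' t.castSucc) (g' t.succ)) * M (g' (Fin.last k)) x)]
        simp
      · simp [hgi]

lemma aux_trace_pow_walk (M : Matrix ι ι ℝ) (k : ℕ) :
    (M ^ k).trace = ∑ g : Fin (k+1) → ι,
      (if g 0 = g (Fin.last k) then ∏ t : Fin k, M (g t.castSucc) (g t.succ) else 0) := by
  rw [Matrix.trace]
  simp only [Matrix.diag, aux_pow_apply_walk M k]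
  rw [Finset.sum_comm]
  refine Finset.sum_congr rfl fun g _ => ?_
  by_cases h : g 0 = g (Fin.last k)
  · rw [if_pos h]
    rw [Finset.sum_eq_single (g 0)]
    · rw [if_pos ⟨rfl, h.symm⟩]
    · intro b _ hb
      rw [if_neg]
      rintro ⟨rfl, -⟩
      exact hb rfl
    · intro hmem
      exact absurd (Finset.mem_univ _) hmem
  · rw [if_neg h]
    refine Finset.sum_eq_zero fun b _ => ?_
    rw [if_neg]
    rintro ⟨rfl, hl⟩
    exact h hl.symm

end WalkAux

section SignAux

lemma aux_pm_mul {x y : ℝ} (hx : x = 1 ∨ x = -1) (hy : y = 1 ∨ y = -1) :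
    x * y = 1 ∨ x * y = -1 := by
  rcases hx with rfl|rfl <;> rcases hy with rfl|rfl <;> norm_num

lemma aux_prod_pm {α : Type*} (S : Finset α) (f : α → ℝ) (h : ∀ x ∈ S, f x = 1 ∨ f x = -1) :
    (∏ x ∈ S, f x) = 1 ∨ (∏ x ∈ S, f x) = -1 := by
  have habs : |∏ x ∈ S, f x| = 1 := by
    rw [Finset.abs_prod]
    exact Finset.prod_eq_one fun x hx => by rcases h x hx with h1|h1 <;> simp [h1]
  exact (abs_eq (by norm_num)).mp habs

lemma aux_neg_one_pow_pm (k : ℕ) : ((-1:ℝ))^k = 1 ∨ ((-1:ℝ))^k = -1 := by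
  rcases Nat.even_or_odd k with h|h
  · exact Or.inl h.neg_one_pow
  · exact Or.inr h.neg_one_pow

lemma aux_sign_algebra {pa pf pu pb qa qk qm qb : ℝ}
    (ha : pa = 1 ∨ pa = -1) (hf : pf = 1 ∨ pf = -1) (hu : pu = 1 ∨ pu = -1)
    (hb : pb = 1 ∨ pb = -1) (hqa : qa = 1 ∨ qa = -1) (hqk : qk = 1 ∨ qk = -1)
    (hqm : qm = 1 ∨ qm = -1) (hqb : qb = 1 ∨ qb = -1)
    (E1 : pa * pf * pu = qa * qk * qm) (E2 : pb * pu = qb * qm) :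
    qb * pb = qk * pf * (qa * pa) := by
  rcases ha with rfl|rfl <;> rcases hf with rfl|rfl <;> rcases hu with rfl|rfl <;>
    rcases hb with rfl|rfl <;> rcases hqa with rfl|rfl <;> rcases hqk with rfl|rfl <;>
    rcases hqm with rfl|rfl <;> rcases hqb with rfl|rfl <;> revert E1 E2 <;> norm_num

/-- The sign of a walk. -/
noncomputable def wsgn {ι : Type*} (s : ι → ι → ℝ) (f : ℕ → ι) (k : ℕ) : ℝ :=
  ∏ t ∈ Finset.range k, s (f t) (f (t+1))

/-- Concatenation of walks. -/
def wcat {ι : Type*} (f : ℕ → ι) (k : ℕ) (g : ℕ → ι) : ℕ → ι :=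
  fun t => if t < k then f t else g (t - k)

lemma wcat_lt {ι : Type*} {f : ℕ → ι} {k : ℕ} {g : ℕ → ι} {t : ℕ} (h : t < k) :
    wcat f k g t = f t := if_pos h

lemma wcat_add {ι : Type*} (f : ℕ → ι) (k : ℕ) (g : ℕ → ι) (u : ℕ) :
    wcat f k g (k + u) = g u := by
  simp only [wcat]
  rw [if_neg (by omega)]
  congr 1
  omega

lemma wcat_le {ι : Type*} {f : ℕ → ι} {k : ℕ} {g : ℕ → ι} (hlink : f k = g 0)
    {t : ℕ} (ht : t ≤ k) : wcat f k g t = f t := by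
  rcases lt_or_eq_of_le ht with h|h
  · exact wcat_lt h
  · subst h
    have h0 : wcat f t g t = g 0 := by simpa using wcat_add f t g 0
    rw [h0, ← hlink]

lemma wcat_zero {ι : Type*} {f : ℕ → ι} {k : ℕ} {g : ℕ → ι} (hlink : f k = g 0) :
    wcat f k g 0 = f 0 := wcat_le hlink (Nat.zero_le k)

lemma wcat_valid {ι : Type*} [Fintype ι] [DecidableEq ι] {A : Matrix ι ι ℝ}
    {f : ℕ → ι} {k : ℕ} {g : ℕ → ι} {m : ℕ}
    (hf : ∀ t < k, A (f t) (f (t+1)) ≠ 0)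
    (hg : ∀ t < m, A (g t) (g (t+1)) ≠ 0) (hlink : f k = g 0) :
    ∀ t < k + m, A (wcat f k g t) (wcat f k g (t+1)) ≠ 0 := by
  intro t ht
  by_cases htk : t < k
  · rw [wcat_lt htk, wcat_le hlink (by omega)]
    exact hf t htk
  · obtain ⟨u, rfl⟩ : ∃ u, t = k + u := ⟨t - k, by omega⟩
    rw [wcat_add, show k + u + 1 = k + (u + 1) by omega, wcat_add]
    exact hg u (by omega)

lemma wsgn_wcat {ι : Type*} (s : ι → ι → ℝ) {f : ℕ → ι} {k : ℕ} {g : ℕ → ι} (m : ℕ)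
    (hlink : f k = g 0) :
    wsgn s (wcat f k g) (k + m) = wsgn s f k * wsgn s g m := by
  rw [wsgn, wsgn, wsgn, Finset.prod_range_add]
  congr 1
  · refine Finset.prod_congr rfl fun t ht => ?_
    rw [Finset.mem_range] at ht
    rw [wcat_lt ht, wcat_le hlink (by omega)]
  · refine Finset.prod_congr rfl fun t _ => ?_
    rw [wcat_add, show k + t + 1 = k + (t+1) by omega, wcat_add]

lemma aux_key_sign {n : ℕ} (A B : Matrix (Fin n) (Fin n) ℝ) (hnn : ∀ i j, 0 ≤ A i j)
    (s : Fin n → Fin n → ℝ) (hs : ∀ i j, s i j = 1 ∨ s i j = -1)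
    (hBs : ∀ i j, B i j = s i j * A i j)
    (htr : ∀ k, 0 < k → (B ^ k).trace = (-1)^k * (A ^ k).trace)
    (k : ℕ) (g : Fin (k+1) → Fin n) (hclosed : g 0 = g (Fin.last k))
    (hvalid : ∀ t : Fin k, A (g t.castSucc) (g t.succ) ≠ 0) :
    (∏ t : Fin k, s (g t.castSucc) (g t.succ)) = (-1:ℝ)^k := by
  rcases Nat.eq_zero_or_pos k with rfl|hk
  · simp
  have hneg1 : ((-1:ℝ))^k * (-1)^k = 1 := by rw [← mul_pow]; norm_num
  have hσ : ∀ h : Fin (k+1) → Fin n,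
      (∏ t : Fin k, s (h t.castSucc) (h t.succ)) = 1 ∨
      (∏ t : Fin k, s (h t.castSucc) (h t.succ)) = -1 :=
    fun h => aux_prod_pm _ _ (fun t _ => hs _ _)
  have hsum0 : ∑ h : Fin (k+1) → Fin n,
      (1 - (-1:ℝ)^k * ∏ t : Fin k, s (h t.castSucc) (h t.succ)) *
        (if h 0 = h (Fin.last k) then ∏ t : Fin k, A (h t.castSucc) (h t.succ) else 0) = 0 := by
    have e1 : ∑ h : Fin (k+1) → Fin n,
        (∏ t : Fin k, s (h t.castSucc) (h t.succ)) *
          (if h 0 = h (Fin.last k) then ∏ t : Fin k, A (h t.castSucc) (h t.succ) else 0)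
        = (B ^ k).trace := by
      rw [aux_trace_pow_walk]
      refine Finset.sum_congr rfl fun h _ => ?_
      by_cases hc : h 0 = h (Fin.last k)
      · rw [if_pos hc, if_pos hc, ← Finset.prod_mul_distrib]
        exact Finset.prod_congr rfl fun t _ => (hBs _ _).symm
      · rw [if_neg hc, if_neg hc, mul_zero]
    have e2 : ∑ h : Fin (k+1) → Fin n,
        (if h 0 = h (Fin.last k) then ∏ t : Fin k, A (h t.castSucc) (h t.succ) else 0)
        = (A ^ k).trace := (aux_trace_pow_walk A k).symm
    simp only [sub_mul, one_mul, Finset.sum_sub_distrib, mul_assoc]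
    rw [← Finset.mul_sum, e1, e2, htr k hk, ← mul_assoc, hneg1, one_mul, sub_self]
  have hnonneg : ∀ h ∈ (Finset.univ : Finset (Fin (k+1) → Fin n)),
      0 ≤ (1 - (-1:ℝ)^k * ∏ t : Fin k, s (h t.castSucc) (h t.succ)) *
        (if h 0 = h (Fin.last k) then ∏ t : Fin k, A (h t.castSucc) (h t.succ) else 0) := by
    intro h _
    refine mul_nonneg ?_ ?_
    · rcases aux_pm_mul (aux_neg_one_pow_pm k) (hσ h) with h1|h1 <;> rw [h1] <;> norm_num
    · split
      · exact Finset.prod_nonneg fun t _ => hnn _ _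
      · exact le_refl 0
  have hterm := (Finset.sum_eq_zero_iff_of_nonneg hnonneg).mp hsum0 g (Finset.mem_univ g)
  rw [if_pos hclosed] at hterm
  have hFpos : (0:ℝ) < ∏ t : Fin k, A (g t.castSucc) (g t.succ) :=
    Finset.prod_pos fun t _ => lt_of_le_of_ne (hnn _ _) (Ne.symm (hvalid t))
  have h1 : 1 - (-1:ℝ)^k * ∏ t : Fin k, s (g t.castSucc) (g t.succ) = 0 := by
    rcases mul_eq_zero.mp hterm with h|h
    · exact h
    · exact absurd h hFpos.ne'
  have h2 : (-1:ℝ)^k * ∏ t : Fin k, s (g t.castSucc) (g t.succ) = 1 := by linarith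
  calc (∏ t : Fin k, s (g t.castSucc) (g t.succ))
      = ((-1:ℝ)^k * (-1)^k) * ∏ t : Fin k, s (g t.castSucc) (g t.succ) := by
        rw [hneg1, one_mul]
    _ = (-1:ℝ)^k * ((-1:ℝ)^k * ∏ t : Fin k, s (g t.castSucc) (g t.succ)) := by ring
    _ = (-1:ℝ)^k := by rw [h2, mul_one]

end SignAux

theorem stmt_3 {n : ℕ} (A : Matrix (Fin n) (Fin n) ℝ)
    (hnn : ∀ i j, 0 ≤ A i j) (hirr : MatIrreducible A)
    (hper : IsPeriod A 1)
    (B : Matrix (Fin n) (Fin n) ℝ) :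
    (matAbs B = A ∧ spec B = (spec A).map (fun z => -z)) ↔
    DiagSignSimilar (-A) B := by
  constructor
  · rintro ⟨habs, hspec⟩
    rcases Nat.eq_zero_or_pos n with hn|hn
    · subst hn
      refine ⟨fun _ => 1, fun i => Or.inl rfl, ?_⟩
      ext i j
      exact i.elim0
    set i₀ : Fin n := ⟨0, hn⟩ with hi₀
    set s : Fin n → Fin n → ℝ := fun i j => if B i j < 0 then -1 else 1 with hs_def
    have hs : ∀ i j, s i j = 1 ∨ s i j = -1 := by
      intro i j
      rw [hs_def]
      dsimp only
      split
      · exact Or.inr rfl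
      · exact Or.inl rfl
    have hA : ∀ i j, A i j = |B i j| := by
      intro i j
      rw [← habs]
      rfl
    have hBs : ∀ i j, B i j = s i j * A i j := by
      intro i j
      rw [hA, hs_def]
      dsimp only
      split
      · rw [abs_of_neg ‹_›]; ring
      · rw [abs_of_nonneg (not_lt.mp ‹_›)]; ring
    have htr : ∀ k, 0 < k → (B ^ k).trace = (-1)^k * (A ^ k).trace := aux_trace_rel A B hspec
    have hkey : ∀ (k : ℕ) (f : ℕ → Fin n), (∀ t < k, A (f t) (f (t+1)) ≠ 0) → f 0 = f k →
        wsgn s f k = (-1:ℝ)^k := by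
      intro k f hval hcl
      have hg := aux_key_sign A B hnn s hs hBs htr k (fun t => f t.val)
        (by simpa [Fin.val_last] using hcl)
        (fun t => by simpa [Fin.coe_castSucc, Fin.val_succ] using hval t.val t.isLt)
      rw [wsgn, Finset.prod_range (fun i => s (f i) (f (i+1)))]
      rw [← hg]
      exact Finset.prod_congr rfl fun t _ => by simp [Fin.coe_castSucc, Fin.val_succ]
    have hex : ∀ i : Fin n, ∃ kf : ℕ × (ℕ → Fin n),
        kf.2 0 = i₀ ∧ kf.2 kf.1 = i ∧ ∀ t < kf.1, A (kf.2 t) (kf.2 (t+1)) ≠ 0 := by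
      intro i
      obtain ⟨k, f, h1, h2, h3⟩ := hirr i₀ i
      exact ⟨(k, f), h1, h2, h3⟩
    choose w hw0 hwk hwv using hex
    set d : Fin n → ℝ := fun i => (-1:ℝ)^((w i).1) * wsgn s (w i).2 (w i).1 with hd_def
    have hsgnpm : ∀ (f : ℕ → Fin n) (k : ℕ), wsgn s f k = 1 ∨ wsgn s f k = -1 :=
      fun f k => aux_prod_pm _ _ (fun t _ => hs _ _)
    have hd : ∀ i, d i = 1 ∨ d i = -1 :=
      fun i => aux_pm_mul (aux_neg_one_pow_pm _) (hsgnpm _ _)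
    have hstep : ∀ (a b : Fin n) (k : ℕ) (f : ℕ → Fin n), f 0 = a → f k = b →
        (∀ t < k, A (f t) (f (t+1)) ≠ 0) → d b = (-1:ℝ)^k * wsgn s f k * d a := by
      intro a b k f hf0 hfk hfv
      obtain ⟨m, u, hu0, hum, huv⟩ := hirr b i₀
      have hlink1 : (w a).2 (w a).1 = f 0 := by rw [hwk, hf0]
      have hlink2 : (wcat (w a).2 (w a).1 f) ((w a).1 + k) = u 0 := by
        rw [wcat_add, hfk, hu0]
      have hlink3 : (w b).2 (w b).1 = u 0 := by rw [hwk, hu0]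
      have hv1 := wcat_valid (hwv a) hfv hlink1
      have hv2 := wcat_valid hv1 huv hlink2
      have hstart : (wcat (wcat (w a).2 (w a).1 f) ((w a).1 + k) u) 0
          = (wcat (wcat (w a).2 (w a).1 f) ((w a).1 + k) u) ((w a).1 + k + m) := by
        rw [wcat_zero hlink2, wcat_zero hlink1, hw0]
        rw [show (w a).1 + k + m = ((w a).1 + k) + m from rfl, wcat_add, hum]
      have E1 := hkey ((w a).1 + k + m) _ hv2 hstart
      rw [show (w a).1 + k + m = ((w a).1 + k) + m from rfl,
        wsgn_wcat s m hlink2, wsgn_wcat s k hlink1] at E1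
      have hstart2 : (wcat (w b).2 (w b).1 u) 0 = (wcat (w b).2 (w b).1 u) ((w b).1 + m) := by
        rw [wcat_zero hlink3, hw0, wcat_add, hum]
      have E2 := hkey ((w b).1 + m) _ (wcat_valid (hwv b) huv hlink3) hstart2
      rw [wsgn_wcat s m hlink3] at E2
      rw [pow_add, pow_add] at E1
      rw [pow_add] at E2
      rw [hd_def]
      dsimp only
      exact aux_sign_algebra (hsgnpm _ _) (hsgnpm _ _) (hsgnpm _ _) (hsgnpm _ _)
        (aux_neg_one_pow_pm _) (aux_neg_one_pow_pm _) (aux_neg_one_pow_pm _)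
        (aux_neg_one_pow_pm _) E1 E2
    have harc : ∀ i j, A i j ≠ 0 → s i j = -(d i * d j) := by
      intro i j hij
      set f : ℕ → Fin n := fun t => if t = 0 then i else j with hf_def
      have hval : ∀ t < 1, A (f t) (f (t+1)) ≠ 0 := by
        intro t ht
        interval_cases t
        simpa [hf_def] using hij
      have hw1 := hstep i j 1 f (by simp [hf_def]) (by simp [hf_def]) hval
      have hsgn1 : wsgn s f 1 = s i j := by
        rw [wsgn, Finset.prod_range_one]
        simp [hf_def]
      rw [hsgn1, pow_one] at hw1
      have hdi2 : d i * d i = 1 := by rcases hd i with h|h <;> rw [h] <;> norm_num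
      have : d j * d i = -1 * s i j * (d i * d i) := by rw [hw1]; ring
      rw [hdi2, mul_one] at this
      rw [show -(d i * d j) = -(d j * d i) by ring, this]
      ring
    refine ⟨d, hd, ?_⟩
    have hdd : diagonal d * diagonal d = 1 := by
      have hfun : (fun i => d i * d i) = fun _ => (1:ℝ) := by
        funext i
        rcases hd i with h|h <;> rw [h] <;> norm_num
      rw [Matrix.diagonal_mul_diagonal, hfun, Matrix.diagonal_one]
    rw [Matrix.inv_eq_right_inv hdd]
    ext i j
    rw [Matrix.mul_diagonal, Matrix.diagonal_mul, Matrix.neg_apply]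
    by_cases hij : A i j = 0
    · have hB0 : B i j = 0 := by
        have := (hA i j).symm.trans hij
        exact abs_eq_zero.mp this
      rw [hB0, hij]
      ring
    · rw [hBs i j, harc i j hij]
      ring
  · rintro ⟨d, hd, hB⟩
    have hdd : diagonal d * diagonal d = 1 := by
      have hfun : (fun i => d i * d i) = fun _ => (1:ℝ) := by
        funext i
        rcases hd i with h|h <;> rw [h] <;> norm_num
      rw [Matrix.diagonal_mul_diagonal, hfun, Matrix.diagonal_one]
    rw [Matrix.inv_eq_right_inv hdd] at hB
    have hBij : ∀ i j, B i j = d i * (-(A i j)) * d j := by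
      intro i j
      rw [hB, Matrix.mul_diagonal, Matrix.diagonal_mul, Matrix.neg_apply]
    constructor
    · funext i j
      show |B i j| = A i j
      rw [hBij]
      rcases hd i with h|h <;> rcases hd j with h'|h' <;>
        rw [h, h'] <;> simp [abs_of_nonneg (hnn i j)]
    · rw [hB, aux_spec_conj _ _ hdd, aux_spec_neg]
end

section
/- Let A be an n×n irreducible nonnegative real matrix and let B, B' be real matrices with |B| = |B'| = A. If there exists an invertible complex diagonal matrix Γ whose diagonal entries all have modulus 1 such that B' = ΓBΓ⁻¹, then B and B' are {−1,1}-diagonally similar. -/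
open Matrix

theorem stmt_5 {n : ℕ} (A B B' : Matrix (Fin n) (Fin n) ℝ)
    (hnn : ∀ i j, 0 ≤ A i j) (hirr : MatIrreducible A)
    (hBabs : matAbs B = A) (hB'abs : matAbs B' = A)
    (γ : Fin n → ℂ) (hγ : ∀ i, ‖γ i‖ = 1)
    (hconj : B'.map Complex.ofReal =
      Matrix.diagonal γ * B.map Complex.ofReal * (Matrix.diagonal γ)⁻¹) :
    DiagSignSimilar B B' := by
  rcases Nat.eq_zero_or_pos n with hn | hn
  · subst hn
    exact ⟨fun _ => 1, fun i => Or.inl rfl, by ext i j; exact absurd i.2 (by omega)⟩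
  have hγ0 : ∀ i, γ i ≠ 0 := by
    intro i h
    have := hγ i
    rw [h] at this
    simp at this
  have hdiaginv : (Matrix.diagonal γ)⁻¹ = Matrix.diagonal (fun i => (γ i)⁻¹) := by
    apply Matrix.inv_eq_right_inv
    rw [Matrix.diagonal_mul_diagonal]
    simp [funext_iff, hγ0]
  -- entrywise equation
  have hent : ∀ i j, (B' i j : ℂ) = γ i * (B i j : ℂ) * (γ j)⁻¹ := by
    intro i j
    have := congrFun (congrFun hconj i) j
    simpa [hdiaginv, Matrix.map_apply, Matrix.mul_apply, Matrix.diagonal_apply,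
      Finset.mul_sum, Finset.sum_mul] using this
  have habsB : ∀ i j, |B i j| = A i j := fun i j => congrFun (congrFun hBabs i) j
  have habsB' : ∀ i j, |B' i j| = A i j := fun i j => congrFun (congrFun hB'abs i) j
  -- arc lemma
  have harc : ∀ i j, A i j ≠ 0 → γ i * (γ j)⁻¹ = 1 ∨ γ i * (γ j)⁻¹ = -1 := by
    intro i j hA
    have hB : B i j ≠ 0 := fun h => hA (by rw [← habsB i j, h, abs_zero])
    have hBC : (B i j : ℂ) ≠ 0 := by exact_mod_cast hB
    have hc : γ i * (γ j)⁻¹ = (B' i j : ℂ) / (B i j : ℂ) := by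
      rw [hent i j]
      field_simp
    have hr : γ i * (γ j)⁻¹ = ((B' i j / B i j : ℝ) : ℂ) := by
      rw [hc]; push_cast; ring
    have habs : |B' i j / B i j| = 1 := by
      rw [abs_div, habsB, habsB']
      field_simp
    rcases (abs_eq (by norm_num : (0:ℝ) ≤ 1)).mp habs with h | h
    · left; rw [hr, h]; norm_num
    · right; rw [hr, h]; norm_num
  -- walk lemma
  have hwalk : ∀ k i j, HasWalk A i j k → γ i * (γ j)⁻¹ = 1 ∨ γ i * (γ j)⁻¹ = -1 := by
    intro k
    induction k with
    | zero =>
      rintro i j ⟨f, h0, hk, -⟩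
      left
      rw [← h0, ← hk]
      exact mul_inv_cancel₀ (hγ0 _)
    | succ k ih =>
      rintro i j ⟨f, h0, hk, hf⟩
      have h1 : γ i * (γ (f 1))⁻¹ = 1 ∨ γ i * (γ (f 1))⁻¹ = -1 := by
        rw [← h0]
        exact harc _ _ (by simpa using hf 0 (Nat.succ_pos k))
      have h2 : γ (f 1) * (γ j)⁻¹ = 1 ∨ γ (f 1) * (γ j)⁻¹ = -1 :=
        ih (f 1) j ⟨fun t => f (t + 1), rfl, hk, fun t ht => hf (t + 1) (by omega)⟩
      have key : γ i * (γ j)⁻¹ = (γ i * (γ (f 1))⁻¹) * (γ (f 1) * (γ j)⁻¹) := by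
        rw [mul_assoc, ← mul_assoc ((γ (f 1))⁻¹), inv_mul_cancel₀ (hγ0 _), one_mul]
      rcases h1 with h1 | h1 <;> rcases h2 with h2 | h2 <;>
        simp [key, h1, h2]
  -- base vertex
  set i0 : Fin n := ⟨0, hn⟩
  have hsign : ∀ i, γ i * (γ i0)⁻¹ = 1 ∨ γ i * (γ i0)⁻¹ = -1 := by
    intro i
    obtain ⟨k, hw⟩ := hirr i i0
    exact hwalk k i i0 hw
  set d : Fin n → ℝ := fun i => (γ i * (γ i0)⁻¹).re with hd
  have hdval : ∀ i, d i = 1 ∨ d i = -1 := by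
    intro i
    rcases hsign i with h | h
    · left; show (γ i * (γ i0)⁻¹).re = 1; rw [h]; norm_num
    · right; show (γ i * (γ i0)⁻¹).re = -1; rw [h]; norm_num
  have hdC : ∀ i, (d i : ℂ) = γ i * (γ i0)⁻¹ := by
    intro i
    rcases hsign i with h | h
    · show (((γ i * (γ i0)⁻¹).re : ℝ) : ℂ) = _
      rw [h]; norm_num
    · show (((γ i * (γ i0)⁻¹).re : ℝ) : ℂ) = _
      rw [h]; norm_num
  refine ⟨d, hdval, ?_⟩
  have hdinv : (Matrix.diagonal d)⁻¹ = Matrix.diagonal (fun i => (d i)⁻¹) := by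
    apply Matrix.inv_eq_right_inv
    rw [Matrix.diagonal_mul_diagonal]
    have : ∀ i, d i ≠ 0 := fun i => by rcases hdval i with h | h <;> rw [h] <;> norm_num
    simp [funext_iff, this]
  ext i j
  rw [hdinv]
  have hrhs : ((Matrix.diagonal fun i => (d i)⁻¹) * B * Matrix.diagonal d) i j
      = (d i)⁻¹ * B i j * d j := by
    simp [Matrix.mul_apply, Matrix.diagonal_apply, Finset.mul_sum, Finset.sum_mul]
  rw [hrhs]
  have hdi : (d i)⁻¹ = d i := by rcases hdval i with h | h <;> rw [h] <;> norm_num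
  rw [hdi]
  -- complex computation
  set u : ℂ := γ i * (γ i0)⁻¹ with hu
  set v : ℂ := γ j * (γ i0)⁻¹ with hv
  have hvinv : v⁻¹ = v := by rcases hsign j with h | h <;> rw [hv, h] <;> norm_num
  have huv : u * v⁻¹ = γ i * (γ j)⁻¹ := by
    rw [hu, hv, mul_inv, inv_inv]
    have : γ i * (γ i0)⁻¹ * ((γ j)⁻¹ * γ i0) = γ i * (γ j)⁻¹ * ((γ i0)⁻¹ * γ i0) := by
      ring
    rw [this, inv_mul_cancel₀ (hγ0 i0), mul_one]
  have hC : (B' i j : ℂ) = ((d i * B i j * d j : ℝ) : ℂ) := by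
    push_cast
    rw [hent i j, hdC i, hdC j, ← hu, ← hv]
    calc γ i * (B i j : ℂ) * (γ j)⁻¹ = (γ i * (γ j)⁻¹) * (B i j : ℂ) := by ring
      _ = (u * v⁻¹) * (B i j : ℂ) := by rw [huv]
      _ = (u * v) * (B i j : ℂ) := by rw [hvinv]
      _ = u * (B i j : ℂ) * v := by ring
  exact_mod_cast hC
end

section
/- Let A be an n×n irreducible nonnegative real matrix with period p and spectral radius ρ(A), and let B be a real matrix with |B| = A whose spectral radius equals ρ(A). If λ is a complex eigenvalue of B with |λ| = ρ(A), then λ = ρ(A)·e^{iπk/p} for some integer k with 0 ≤ k ≤ 2p−1. -/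
open Matrix

namespace Wie

open Polynomial

variable {n : ℕ}

/-! ### Walks and powers -/

lemma entry_pow_nonneg {A : Matrix (Fin n) (Fin n) ℝ} (hnn : ∀ i j, 0 ≤ A i j) (k : ℕ) :
    ∀ i j, 0 ≤ (A ^ k) i j := by
  induction k with
  | zero => intro i j; by_cases h : i = j <;> simp [Matrix.one_apply, h]
  | succ k ih =>
    intro i j
    rw [pow_succ, Matrix.mul_apply]
    exact Finset.sum_nonneg fun l _ => mul_nonneg (ih i l) (hnn l j)

lemma pos_of_hasWalk {A : Matrix (Fin n) (Fin n) ℝ} (hnn : ∀ i j, 0 ≤ A i j)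
    {i j : Fin n} {k : ℕ} (h : HasWalk A i j k) : 0 < (A ^ k) i j := by
  induction k generalizing j with
  | zero =>
    obtain ⟨f, h0, hk, -⟩ := h
    have : i = j := h0 ▸ hk
    subst this; simp
  | succ k ih =>
    obtain ⟨f, h0, hk, hstep⟩ := h
    have hwk : HasWalk A i (f k) k := ⟨f, h0, rfl, fun t ht => hstep t (by omega)⟩
    have h1 : 0 < (A ^ k) i (f k) := ih hwk
    have h2 : 0 < A (f k) j := by
      have := hstep k (by omega)
      rw [hk] at this
      exact lt_of_le_of_ne (hnn _ _) (Ne.symm this)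
    rw [pow_succ, Matrix.mul_apply]
    refine Finset.sum_pos' (fun l _ => mul_nonneg (entry_pow_nonneg hnn k i l) (hnn l j))
      ⟨f k, Finset.mem_univ _, mul_pos h1 h2⟩

lemma hasWalk_of_ne_zero {A : Matrix (Fin n) (Fin n) ℝ} {i j : Fin n} {k : ℕ}
    (h : (A ^ k) i j ≠ 0) : HasWalk A i j k := by
  induction k generalizing j with
  | zero =>
    have : i = j := by by_contra hij; rw [pow_zero, Matrix.one_apply_ne hij] at h; exact h rfl
    exact ⟨fun _ => i, rfl, this ▸ rfl, by omega⟩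
  | succ k ih =>
    rw [pow_succ, Matrix.mul_apply] at h
    obtain ⟨l, -, hl⟩ := Finset.exists_ne_zero_of_sum_ne_zero h
    have h1 : (A ^ k) i l ≠ 0 := fun h' => hl (by rw [h', zero_mul])
    have h2 : A l j ≠ 0 := fun h' => hl (by rw [h', mul_zero])
    obtain ⟨f, h0, hk, hstep⟩ := ih h1
    refine ⟨fun t => if t = k + 1 then j else f t, by simp [h0], by simp, ?_⟩
    intro t ht
    rcases Nat.lt_succ_iff_lt_or_eq.mp ht with ht' | rfl
    · have h3 : t ≠ k + 1 := by omega
      have h4 : t + 1 ≠ k + 1 := by omega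
      simpa only [if_neg h3, if_neg h4] using hstep t ht'
    · simpa [hk] using h2

lemma hasWalk_trans {A : Matrix (Fin n) (Fin n) ℝ} (hnn : ∀ i j, 0 ≤ A i j)
    {i j l : Fin n} {k m : ℕ} (h1 : HasWalk A i j k) (h2 : HasWalk A j l m) :
    HasWalk A i l (k + m) := by
  apply hasWalk_of_ne_zero
  have : 0 < (A ^ (k + m)) i l := by
    rw [pow_add, Matrix.mul_apply]
    refine Finset.sum_pos' (fun r _ => mul_nonneg (entry_pow_nonneg hnn k i r)
      (entry_pow_nonneg hnn m r l))
      ⟨j, Finset.mem_univ _, mul_pos (pos_of_hasWalk hnn h1) (pos_of_hasWalk hnn h2)⟩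
  exact this.ne'

/-! ### Characteristic polynomial, spectrum, spectral radius -/

lemma eval_charpoly (M : Matrix (Fin n) (Fin n) ℂ) (z : ℂ) :
    M.charpoly.eval z = (z • (1 : Matrix (Fin n) (Fin n) ℂ) - M).det := by
  rw [Matrix.charpoly]
  rw [show (Polynomial.eval z) = (Polynomial.evalRingHom z : ℂ[X] →+* ℂ) from rfl]
  rw [RingHom.map_det]
  congr 1
  ext i j
  simp only [RingHom.mapMatrix_apply]
  by_cases h : i = j
  · subst h; simp [charmatrix_apply_eq, Matrix.one_apply]
  · simp [charmatrix_apply_ne _ _ _ h, Matrix.one_apply_ne h]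

lemma exists_eigenvector {M : Matrix (Fin n) (Fin n) ℂ} {z : ℂ}
    (h : M.charpoly.IsRoot z) : ∃ x : Fin n → ℂ, x ≠ 0 ∧ M *ᵥ x = z • x := by
  have hdet : (z • (1 : Matrix (Fin n) (Fin n) ℂ) - M).det = 0 := by
    rw [← eval_charpoly]; exact h
  obtain ⟨v, hv0, hv⟩ := (Matrix.exists_mulVec_eq_zero_iff).mpr hdet
  refine ⟨v, hv0, ?_⟩
  rw [Matrix.sub_mulVec, Matrix.smul_mulVec, Matrix.one_mulVec] at hv
  linear_combination (norm := module) -hv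

lemma isRoot_of_mem_spectrum {M : Matrix (Fin n) (Fin n) ℂ} {z : ℂ}
    (h : z ∈ spectrum ℂ M) : M.charpoly.IsRoot z := by
  rw [spectrum.mem_iff] at h
  rw [Polynomial.IsRoot, eval_charpoly]
  by_contra hdet
  apply h
  rw [Matrix.isUnit_iff_isUnit_det]
  have h2 : (algebraMap ℂ (Matrix (Fin n) (Fin n) ℂ)) z - M = z • 1 - M := by
    rw [Algebra.algebraMap_eq_smul_one]
  rw [h2]
  exact isUnit_iff_ne_zero.mpr hdet

lemma bddAbove_spec (M : Matrix (Fin n) (Fin n) ℝ) :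
    BddAbove ((fun z : ℂ => ‖z‖) '' {z | z ∈ spec M}) :=
  ((spec M).finite_toSet.image _).bddAbove

lemma abs_le_specRadius {M : Matrix (Fin n) (Fin n) ℝ} {z : ℂ} (h : z ∈ spec M) :
    ‖z‖ ≤ specRadius M :=
  le_csSup (bddAbove_spec M) ⟨z, h, rfl⟩

lemma mem_spec_iff {M : Matrix (Fin n) (Fin n) ℝ} {z : ℂ} :
    z ∈ spec M ↔ ((M.map Complex.ofReal).charpoly).IsRoot z := by
  rw [spec, Polynomial.mem_roots ((M.map Complex.ofReal).charpoly_monic).ne_zero]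

lemma specRadius_nonneg (hn : 0 < n) (M : Matrix (Fin n) (Fin n) ℝ) : 0 ≤ specRadius M := by
  have hdeg : ((M.map Complex.ofReal).charpoly).natDegree = n := by
    rw [Matrix.charpoly_natDegree_eq_dim, Fintype.card_fin]
  obtain ⟨z, hz⟩ := IsAlgClosed.exists_root (k := ℂ) ((M.map Complex.ofReal).charpoly)
    (by rw [Polynomial.degree_eq_natDegree ((M.map Complex.ofReal).charpoly_monic).ne_zero, hdeg]
        simp [hn.ne'])
  exact le_trans (norm_nonneg z) (abs_le_specRadius (mem_spec_iff.mpr hz))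

lemma pow_mulVec_le {A : Matrix (Fin n) (Fin n) ℝ} (hnn : ∀ i j, 0 ≤ A i j)
    {y : Fin n → ℝ} {c : ℝ} (hc : 0 ≤ c)
    (h : ∀ i, c * y i ≤ (A *ᵥ y) i) : ∀ m i, c ^ m * y i ≤ ((A ^ m) *ᵥ y) i := by
  intro m
  induction m with
  | zero => intro i; simp [Matrix.one_mulVec]
  | succ m ih =>
    intro i
    have h1 : (A ^ (m + 1)) *ᵥ y = (A ^ m) *ᵥ (A *ᵥ y) := by
      rw [pow_succ, ← Matrix.mulVec_mulVec]
    have hmv : ∀ (M : Matrix (Fin n) (Fin n) ℝ) (v : Fin n → ℝ) i,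
        (M *ᵥ v) i = ∑ j, M i j * v j := fun M v i => rfl
    calc c ^ (m + 1) * y i = c * (c ^ m * y i) := by ring
      _ ≤ c * ((A ^ m *ᵥ y) i) := mul_le_mul_of_nonneg_left (ih i) hc
      _ = ∑ j, (A ^ m) i j * (c * y j) := by
          rw [hmv]; rw [Finset.mul_sum]; apply Finset.sum_congr rfl; intros; ring
      _ ≤ ∑ j, (A ^ m) i j * (A *ᵥ y) j :=
          Finset.sum_le_sum fun j _ => mul_le_mul_of_nonneg_left (h j) (entry_pow_nonneg hnn m i j)
      _ = ((A ^ m) *ᵥ (A *ᵥ y)) i := (hmv _ _ _).symm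
      _ = ((A ^ (m + 1)) *ᵥ y) i := by rw [h1]

section NormInstances

attribute [local instance] Matrix.linftyOpNormedRing Matrix.linftyOpNormedAlgebra

lemma row_sum_le_norm (M : Matrix (Fin n) (Fin n) ℂ) (i : Fin n) :
    (∑ j, ‖M i j‖) ≤ ‖M‖ := by
  rw [Matrix.linfty_opNorm_def]
  have h := Finset.le_sup (f := fun i => ∑ j, ‖M i j‖₊) (Finset.mem_univ i)
  calc (∑ j, ‖M i j‖) = ((∑ j, ‖M i j‖₊ : NNReal) : ℝ) := by push_cast; rfl
    _ ≤ _ := by exact_mod_cast h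

lemma map_pow_ofReal (A : Matrix (Fin n) (Fin n) ℝ) (m : ℕ) :
    (A.map Complex.ofReal) ^ m = (A ^ m).map Complex.ofReal := by
  induction m with
  | zero => ext i j; by_cases h : i = j <;> simp [Matrix.one_apply, h]
  | succ m ih =>
    rw [pow_succ, pow_succ, ih]
    ext i j
    simp [Matrix.mul_apply, Matrix.map_apply]

/-- The Collatz–Wielandt style bound, proved via Gelfand's formula. -/
lemma le_specRadius_of_mulVec (hn : 0 < n) {A : Matrix (Fin n) (Fin n) ℝ}
    (hnn : ∀ i j, 0 ≤ A i j) {y : Fin n → ℝ} (hy : ∀ i, 0 < y i) {c : ℝ} (hc : 0 ≤ c)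
    (h : ∀ i, c * y i ≤ (A *ᵥ y) i) : c ≤ specRadius A := by
  haveI : Nonempty (Fin n) := Fin.pos_iff_nonempty.mp hn
  haveI : CompleteSpace (Matrix (Fin n) (Fin n) ℂ) := FiniteDimensional.complete ℂ _
  by_contra hlt
  push_neg at hlt
  have hρ0 : 0 ≤ specRadius A := specRadius_nonneg hn A
  have hc0 : 0 < c := lt_of_le_of_lt hρ0 hlt
  set r : ℝ := (specRadius A + c) / 2 with hr
  have hr0 : 0 < r := by positivity
  have hrc : r < c := by rw [hr]; linarith
  have hsr : specRadius A < r := by rw [hr]; linarith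
  set Ac := A.map Complex.ofReal with hAc
  set ymin : ℝ := Finset.univ.inf' Finset.univ_nonempty y with hymin
  set ymax : ℝ := Finset.univ.sup' Finset.univ_nonempty y with hymax
  have hymin0 : 0 < ymin := by
    rw [hymin, Finset.lt_inf'_iff]; exact fun i _ => hy i
  have hymax0 : 0 < ymax := lt_of_lt_of_le hymin0 (by
    obtain ⟨i⟩ := ‹Nonempty (Fin n)›
    exact le_trans (Finset.inf'_le _ (Finset.mem_univ i)) (Finset.le_sup' _ (Finset.mem_univ i)))
  have hpow := pow_mulVec_le hnn hc h
  have hnorm : ∀ m : ℕ, c ^ m * (ymin / ymax) ≤ ‖Ac ^ m‖ := by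
    intro m
    obtain ⟨i⟩ := ‹Nonempty (Fin n)›
    have h1 : c ^ m * ymin ≤ ((A ^ m) *ᵥ y) i := by
      refine le_trans ?_ (hpow m i)
      exact mul_le_mul_of_nonneg_left (Finset.inf'_le _ (Finset.mem_univ i)) (pow_nonneg hc m)
    have h2 : ((A ^ m) *ᵥ y) i ≤ (∑ j, (A ^ m) i j) * ymax := by
      have hmv : ((A ^ m) *ᵥ y) i = ∑ j, (A ^ m) i j * y j := rfl
      rw [hmv, Finset.sum_mul]
      exact Finset.sum_le_sum fun j _ => mul_le_mul_of_nonneg_left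
        (Finset.le_sup' _ (Finset.mem_univ j)) (entry_pow_nonneg hnn m i j)
    have h3 : (∑ j, (A ^ m) i j) ≤ ‖Ac ^ m‖ := by
      refine le_trans ?_ (row_sum_le_norm (Ac ^ m) i)
      rw [hAc, map_pow_ofReal]
      apply le_of_eq
      apply Finset.sum_congr rfl
      intro j _
      rw [Matrix.map_apply, Complex.norm_real, Real.norm_eq_abs,
        abs_of_nonneg (entry_pow_nonneg hnn m i j)]
    have h4 : c ^ m * ymin ≤ ‖Ac ^ m‖ * ymax :=
      le_trans (h1.trans h2) (mul_le_mul_of_nonneg_right h3 hymax0.le)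
    calc c ^ m * (ymin / ymax) = (c ^ m * ymin) / ymax := by ring
      _ ≤ (‖Ac ^ m‖ * ymax) / ymax := (div_le_div_iff_of_pos_right hymax0).mpr h4
      _ = ‖Ac ^ m‖ := by field_simp
  have hsrad : spectralRadius ℂ Ac ≤ ENNReal.ofReal (specRadius A) := by
    rw [spectralRadius]
    refine iSup₂_le fun z hz => ?_
    have hroot : z ∈ spec A := mem_spec_iff.mpr (isRoot_of_mem_spectrum hz)
    have h1 : ‖z‖ ≤ specRadius A := abs_le_specRadius hroot
    rw [← ENNReal.ofReal_coe_nnreal, coe_nnnorm]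
    exact ENNReal.ofReal_le_ofReal h1
  have hgel := spectrum.pow_nnnorm_pow_one_div_tendsto_nhds_spectralRadius Ac
  have hlt2 : spectralRadius ℂ Ac < ENNReal.ofReal r :=
    lt_of_le_of_lt hsrad ((ENNReal.ofReal_lt_ofReal_iff hr0).mpr hsr)
  have hev1 : ∀ᶠ m : ℕ in Filter.atTop,
      (‖Ac ^ m‖₊ : ENNReal) ^ (1 / (m : ℝ)) < ENNReal.ofReal r :=
    hgel.eventually_lt_const hlt2
  have hev2 : ∀ᶠ m : ℕ in Filter.atTop, (r / c) ^ m < ymin / ymax := by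
    have htend : Filter.Tendsto (fun m : ℕ => (r / c) ^ m) Filter.atTop (nhds 0) :=
      tendsto_pow_atTop_nhds_zero_of_lt_one (by positivity) ((div_lt_one hc0).mpr hrc)
    exact htend.eventually_lt_const (by positivity)
  have hev3 : ∀ᶠ m : ℕ in Filter.atTop, 1 ≤ m := Filter.eventually_ge_atTop 1
  obtain ⟨m, h1, h2, h3⟩ := (hev1.and (hev2.and hev3)).exists
  have hm0 : (m : ℝ) ≠ 0 := by exact_mod_cast Nat.one_le_iff_ne_zero.mp h3
  have hx : ((‖Ac ^ m‖₊ : ENNReal) ^ (1 / (m : ℝ))) ^ (m : ℕ) < (ENNReal.ofReal r) ^ m :=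
    ENNReal.pow_lt_pow_left (Nat.one_le_iff_ne_zero.mp h3) h1
  rw [← ENNReal.rpow_natCast ((‖Ac ^ m‖₊ : ENNReal) ^ (1 / (m : ℝ))) m,
    ← ENNReal.rpow_mul, one_div_mul_cancel hm0, ENNReal.rpow_one] at hx
  rw [← ENNReal.ofReal_pow hr0.le, ← ENNReal.ofReal_coe_nnreal, coe_nnnorm,
    ENNReal.ofReal_lt_ofReal_iff_of_nonneg (norm_nonneg _)] at hx
  have hfinal : c ^ m * (ymin / ymax) < r ^ m := lt_of_le_of_lt (hnorm m) hx
  have hcon : ymin / ymax < (r / c) ^ m := by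
    rw [div_pow, lt_div_iff₀ (by positivity)]
    calc ymin / ymax * c ^ m = c ^ m * (ymin / ymax) := by ring
      _ < r ^ m := hfinal
  linarith [lt_trans hcon h2]

end NormInstances

/-! ### Triangle equality -/

lemma re_eq_abs_imp {z : ℂ} (h : z.re = ‖z‖) : z = (‖z‖ : ℂ) := by
  have him : z.im = 0 := by
    have h1 : ‖z‖ ^ 2 = z.re ^ 2 + z.im ^ 2 := by
      rw [Complex.sq_norm, Complex.normSq_apply]; ring
    have h2 : z.im ^ 2 = 0 := by rw [← h] at h1; nlinarith
    exact pow_eq_zero_iff (n := 2) (by norm_num) |>.mp h2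
  apply Complex.ext
  · simp [h]
  · simp [him]

lemma triangle_eq {ι : Type*} (s : Finset ι) (a : ι → ℂ)
    (h : ‖∑ k ∈ s, a k‖ = ∑ k ∈ s, ‖a k‖) :
    ∀ j ∈ s, (‖∑ k ∈ s, a k‖ : ℂ) * a j
      = (‖a j‖ : ℂ) * (∑ k ∈ s, a k) := by
  intro j hj
  set t : ℂ := ∑ k ∈ s, a k with ht
  by_cases ht0 : t = 0
  · have hsum0 : ∑ k ∈ s, ‖a k‖ = 0 := by rw [← h, ht0, norm_zero]
    have hz : ∀ k ∈ s, ‖a k‖ = 0 :=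
      (Finset.sum_eq_zero_iff_of_nonneg fun k _ => norm_nonneg _).mp hsum0
    have haj : a j = 0 := by
      have := hz j hj
      simpa using norm_eq_zero.mp this
    simp [ht0, haj]
  · have habs0 : 0 < ‖t‖ := norm_pos_iff.mpr ht0
    have key : ∀ k ∈ s, (a k * (starRingEnd ℂ) t).re = ‖a k‖ * ‖t‖ := by
      have hle : ∀ k ∈ s, (a k * (starRingEnd ℂ) t).re ≤ ‖a k‖ * ‖t‖ := by
        intro k _
        calc (a k * (starRingEnd ℂ) t).re ≤ ‖a k * (starRingEnd ℂ) t‖ :=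
              Complex.re_le_norm _
          _ = ‖a k‖ * ‖t‖ := by rw [norm_mul, Complex.norm_conj]
      have hsum : ∑ k ∈ s, (a k * (starRingEnd ℂ) t).re
          = ∑ k ∈ s, ‖a k‖ * ‖t‖ := by
        have h1 : ∑ k ∈ s, (a k * (starRingEnd ℂ) t).re = (t * (starRingEnd ℂ) t).re := by
          rw [ht, Finset.sum_mul]
          exact (Complex.re_sum s _).symm
        have h2 : (t * (starRingEnd ℂ) t).re = ‖t‖ ^ 2 := by
          rw [Complex.mul_conj]
          simp [Complex.sq_norm]
        rw [h1, h2, ← Finset.sum_mul, ← h]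
        ring
      intro k hk
      by_contra hne
      have hlt : (a k * (starRingEnd ℂ) t).re < ‖a k‖ * ‖t‖ :=
        lt_of_le_of_ne (hle k hk) hne
      have hslt : ∑ k ∈ s, (a k * (starRingEnd ℂ) t).re
          < ∑ k ∈ s, ‖a k‖ * ‖t‖ :=
        Finset.sum_lt_sum hle ⟨k, hk, hlt⟩
      exact absurd hsum hslt.ne
    have hz := key j hj
    have habs : ‖a j * (starRingEnd ℂ) t‖
        = ‖a j‖ * ‖t‖ := by rw [norm_mul, Complex.norm_conj]
    have heq : a j * (starRingEnd ℂ) t = ((‖a j‖ * ‖t‖ : ℝ) : ℂ) := by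
      have h2 := re_eq_abs_imp (z := a j * (starRingEnd ℂ) t) (hz.trans habs.symm)
      rw [habs] at h2; exact h2
    have hct : (starRingEnd ℂ) t * t = ((‖t‖ : ℂ)) ^ 2 := by
      rw [mul_comm, Complex.mul_conj, Complex.normSq_eq_norm_sq]; push_cast; ring
    have h0 : (‖t‖ : ℂ) ≠ 0 := by exact_mod_cast habs0.ne'
    apply mul_left_cancel₀ h0
    calc (‖t‖ : ℂ) * ((‖t‖ : ℂ) * a j)
        = a j * ((starRingEnd ℂ) t * t) := by rw [hct]; ring
      _ = ((‖a j‖ * ‖t‖ : ℝ) : ℂ) * t := by rw [← mul_assoc, heq]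
      _ = (‖t‖ : ℂ) * ((‖a j‖ : ℂ) * t) := by push_cast; ring

/-! ### Period and roots of unity -/

lemma pow_period_eq_one {γ : ℂ} (hγ : γ ≠ 0) (S : Set ℕ) {p : ℕ}
    (hdvd : ∀ k ∈ S, p ∣ k) (hmax : ∀ q : ℕ, (∀ k ∈ S, q ∣ k) → q ∣ p)
    (hS : ∀ k ∈ S, γ ^ k = 1) : γ ^ p = 1 := by
  set T : AddSubgroup ℤ :=
    { carrier := {m : ℤ | γ ^ m = 1}
      zero_mem' := by simp
      add_mem' := by
        intro a b ha hb
        simp only [Set.mem_setOf_eq] at *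
        rw [zpow_add₀ hγ, ha, hb, one_mul]
      neg_mem' := by
        intro a ha
        simp only [Set.mem_setOf_eq] at *
        rw [_root_.zpow_neg, ha, inv_one] } with hT
  set H := AddSubgroup.closure ((fun k : ℕ => (k : ℤ)) '' S) with hH
  obtain ⟨g, hg⟩ := Int.subgroup_cyclic H
  have hgH : g ∈ H := by
    rw [hg]
    exact AddSubgroup.subset_closure rfl
  have hHT : H ≤ T := by
    rw [hH]
    apply (AddSubgroup.closure_le T).mpr
    rintro - ⟨k, hk, rfl⟩
    show γ ^ (k : ℤ) = 1
    rw [zpow_natCast]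
    exact hS k hk
  have hpg : (p : ℤ) ∣ g := by
    set D : AddSubgroup ℤ :=
      { carrier := {m : ℤ | (p : ℤ) ∣ m}
        zero_mem' := dvd_zero _
        add_mem' := fun ha hb => dvd_add ha hb
        neg_mem' := fun ha => dvd_neg.mpr ha }
    have hHD : H ≤ D := by
      rw [hH]
      apply (AddSubgroup.closure_le D).mpr
      rintro - ⟨k, hk, rfl⟩
      exact Int.natCast_dvd_natCast.mpr (hdvd k hk)
    exact hHD hgH
  have hgS : ∀ k ∈ S, g.natAbs ∣ k := by
    intro k hk
    have hkH : (k : ℤ) ∈ H := by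
      rw [hH]; exact AddSubgroup.subset_closure ⟨k, hk, rfl⟩
    rw [hg, AddSubgroup.mem_closure_singleton] at hkH
    obtain ⟨m, hm⟩ := hkH
    have : g ∣ (k : ℤ) := ⟨m, by rw [← hm, smul_eq_mul, mul_comm]⟩
    have h2 := Int.natAbs_dvd_natAbs.mpr this
    simpa using h2
  have h1 : g.natAbs ∣ p := hmax _ hgS
  have h2 : p ∣ g.natAbs := by
    have := Int.dvd_natAbs.mpr hpg
    exact_mod_cast this
  have hpeq : p = g.natAbs := Nat.dvd_antisymm h2 h1
  have hγg : γ ^ g = 1 := hHT hgH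
  have hnat : γ ^ ((g.natAbs : ℤ)) = 1 := by
    rcases Int.natAbs_eq g with he | he
    · rw [← he]; exact hγg
    · have : ((g.natAbs : ℤ)) = -g := by omega
      rw [this, _root_.zpow_neg, hγg, inv_one]
  rw [← zpow_natCast γ p, hpeq]
  exact hnat

lemma exists_exp_of_pow {c : ℂ} {p : ℕ} (hp : 0 < p) (hc : c ^ (2 * p) = 1) :
    ∃ k : ℕ, k ≤ 2 * p - 1 ∧ c = Complex.exp (Complex.I * Real.pi * k / p) := by
  haveI : NeZero (2 * p) := ⟨by omega⟩
  obtain ⟨k, hk, hke⟩ :=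
    (Complex.isPrimitiveRoot_exp (2 * p) (by omega)).eq_pow_of_pow_eq_one hc
  refine ⟨k, by omega, ?_⟩
  rw [← hke, ← Complex.exp_nat_mul]
  congr 1
  have hp' : (p : ℂ) ≠ 0 := by exact_mod_cast hp.ne'
  push_cast
  field_simp

end Wie

open Wie

theorem stmt_6 {n : ℕ} (A : Matrix (Fin n) (Fin n) ℝ)
    (hnn : ∀ i j, 0 ≤ A i j) (hirr : MatIrreducible A)
    (p : ℕ) (hp : IsPeriod A p)
    (B : Matrix (Fin n) (Fin n) ℝ) (hBabs : matAbs B = A)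
    (hρ : specRadius B = specRadius A)
    (lam : ℂ) (hmem : lam ∈ spec B) (hlam : ‖lam‖ = specRadius A) :
    ∃ k : ℕ, k ≤ 2 * p - 1 ∧
      lam = (specRadius A : ℂ) * Complex.exp (Complex.I * Real.pi * k / p) := by
  classical
  set ρ : ℝ := specRadius A with hρdef
  by_cases hρz : ρ = 0
  · refine ⟨0, Nat.zero_le _, ?_⟩
    have hl0 : lam = 0 := by
      have : ‖lam‖ = 0 := by rw [hlam, hρz]
      exact norm_eq_zero.mp this
    rw [hl0, hρz]
    simp
  have hρpos : 0 < ρ := lt_of_le_of_ne (hlam ▸ norm_nonneg lam) (Ne.symm hρz)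
  -- eigenvector of B
  have hroot : ((B.map Complex.ofReal).charpoly).IsRoot lam := Wie.mem_spec_iff.mp hmem
  obtain ⟨x, hx0, hx⟩ := Wie.exists_eigenvector hroot
  set Bc := B.map Complex.ofReal with hBc
  set y : Fin n → ℝ := fun i => ‖x i‖ with hy
  obtain ⟨j0, hj0⟩ : ∃ j0, x j0 ≠ 0 := by
    by_contra hall; push_neg at hall
    exact hx0 (funext fun i => hall i)
  have hyj0 : 0 < y j0 := by
    rw [hy]; exact norm_pos_iff.mpr hj0
  have hn : 0 < n := j0.pos
  have hynn : ∀ i, 0 ≤ y i := fun i => norm_nonneg _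
  have hAabs : ∀ i j, ‖Bc i j‖ = A i j := by
    intro i j
    have h1 := congrFun (congrFun hBabs i) j
    rw [hBc]
    simp only [Matrix.map_apply, Complex.norm_real, Real.norm_eq_abs]
    exact h1
  have hstep : ∀ i, ρ * y i ≤ (A *ᵥ y) i := by
    intro i
    have h1 : (∑ j, Bc i j * x j) = lam * x i := by
      calc (∑ j, Bc i j * x j) = (Bc *ᵥ x) i := rfl
        _ = lam * x i := by rw [hx]; rfl
    have h2 : ‖∑ j, Bc i j * x j‖ = ρ * y i := by
      rw [h1, norm_mul, hlam]
    have h3 : ‖∑ j, Bc i j * x j‖ ≤ ∑ j, ‖Bc i j * x j‖ :=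
      norm_sum_le _ _
    have h4 : ∑ j, ‖Bc i j * x j‖ = (A *ᵥ y) i := by
      refine Eq.trans (Finset.sum_congr rfl fun j _ => ?_) rfl
      rw [norm_mul, hAabs]
    rw [← h2]
    rw [← h4] at *
    exact h3
  -- equality A y = ρ y
  have heqv : ∀ i, (A *ᵥ y) i = ρ * y i := by
    by_contra hne
    push_neg at hne
    obtain ⟨i0, hi0⟩ := hne
    choose K hK using fun ij : Fin n × Fin n => hirr ij.1 ij.2
    set N := Finset.univ.sup K with hN
    set C := ∑ k ∈ Finset.range (N + 1), A ^ k with hC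
    have hCapply : ∀ i j, C i j = ∑ k ∈ Finset.range (N + 1), (A ^ k) i j := by
      intro i j
      rw [hC]
      exact Matrix.sum_apply i j _ _
    have hCpos : ∀ i j, 0 < C i j := by
      intro i j
      have hk : K (i, j) ∈ Finset.range (N + 1) :=
        Finset.mem_range.mpr (Nat.lt_succ_of_le (Finset.le_sup (Finset.mem_univ _)))
      rw [hCapply]
      exact Finset.sum_pos' (fun k _ => entry_pow_nonneg hnn k i j)
        ⟨K (i, j), hk, pos_of_hasWalk hnn (hK (i, j))⟩
    set z : Fin n → ℝ := fun i => (A *ᵥ y) i - ρ * y i with hz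
    have hznn : ∀ i, 0 ≤ z i := fun i => sub_nonneg.mpr (hstep i)
    have hzi0 : 0 < z i0 := by
      have h8 : z i0 = (A *ᵥ y) i0 - ρ * y i0 := rfl
      rcases lt_or_eq_of_le (hstep i0) with h9 | h9
      · rw [h8]; linarith
      · exact absurd h9.symm hi0
    set u := C *ᵥ y with hu
    have hupos : ∀ i, 0 < u i := by
      intro i
      have h5 : u i = ∑ j, C i j * y j := rfl
      rw [h5]
      exact Finset.sum_pos' (fun j _ => mul_nonneg (hCpos i j).le (hynn j))
        ⟨j0, Finset.mem_univ _, mul_pos (hCpos i j0) hyj0⟩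
    set w := C *ᵥ z with hw
    have hwpos : ∀ i, 0 < w i := by
      intro i
      have h5 : w i = ∑ j, C i j * z j := rfl
      rw [h5]
      exact Finset.sum_pos' (fun j _ => mul_nonneg (hCpos i j).le (hznn j))
        ⟨i0, Finset.mem_univ _, mul_pos (hCpos i i0) hzi0⟩
    have hAyz : A *ᵥ y = ρ • y + z := by
      funext i
      simp [hz, Pi.add_apply, Pi.smul_apply, smul_eq_mul]
    have hcomm : A * C = C * A := by
      rw [hC, Finset.mul_sum, Finset.sum_mul]
      apply Finset.sum_congr rfl
      intro k _
      rw [← pow_succ, ← pow_succ']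
    have hAu : A *ᵥ u = ρ • u + w := by
      rw [hu, hw, Matrix.mulVec_mulVec, hcomm, ← Matrix.mulVec_mulVec, hAyz,
        Matrix.mulVec_add]
      congr 1
      rw [Matrix.mulVec_smul]
    haveI : Nonempty (Fin n) := Fin.pos_iff_nonempty.mp hn
    set ε := Finset.univ.inf' Finset.univ_nonempty (fun i => w i / u i) with hε
    have hεpos : 0 < ε := by
      rw [hε, Finset.lt_inf'_iff]
      exact fun i _ => div_pos (hwpos i) (hupos i)
    have hgoal : ∀ i, (ρ + ε) * u i ≤ (A *ᵥ u) i := by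
      intro i
      have h5 : ε ≤ w i / u i := Finset.inf'_le _ (Finset.mem_univ i)
      have h6 : ε * u i ≤ w i := by
        rw [← div_mul_cancel₀ (w i) (hupos i).ne']
        exact mul_le_mul_of_nonneg_right h5 (hupos i).le
      have h7 : (A *ᵥ u) i = ρ * u i + w i := by
        rw [hAu]; simp [Pi.add_apply, Pi.smul_apply, smul_eq_mul]
      rw [h7]; nlinarith
    have hle := le_specRadius_of_mulVec hn hnn hupos (by linarith [hρpos.le, hεpos.le]) hgoal
    rw [← hρdef] at hle
    linarith
  -- strict positivity of y
  have hAy : A *ᵥ y = ρ • y := by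
    funext i
    rw [heqv i]; rfl
  have hpowy : ∀ k, (A ^ k) *ᵥ y = (ρ ^ k) • y := by
    intro k
    induction k with
    | zero => simp [Matrix.one_mulVec]
    | succ k ih =>
      rw [pow_succ, ← Matrix.mulVec_mulVec, hAy, Matrix.mulVec_smul, ih, smul_smul, pow_succ]
      congr 1
      ring
  have hypos : ∀ i, 0 < y i := by
    intro i
    obtain ⟨k, hk⟩ := hirr i j0
    have h1 : 0 < (A ^ k) i j0 := pos_of_hasWalk hnn hk
    have h2 : ρ ^ k * y i = ∑ j, (A ^ k) i j * y j := by
      have := congrFun (hpowy k) i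
      calc ρ ^ k * y i = ((ρ ^ k) • y) i := rfl
        _ = ((A ^ k) *ᵥ y) i := this.symm
        _ = ∑ j, (A ^ k) i j * y j := rfl
    have h3 : 0 < ∑ j, (A ^ k) i j * y j :=
      Finset.sum_pos' (fun j _ => mul_nonneg (entry_pow_nonneg hnn k i j) (hynn j))
        ⟨j0, Finset.mem_univ _, mul_pos h1 hyj0⟩
    nlinarith [pow_pos hρpos k, h2 ▸ h3]
  -- lam ≠ 0
  have hlam0 : lam ≠ 0 := by
    intro h
    rw [h, norm_zero] at hlam
    exact hρz hlam.symm
  have hρc : ((ρ : ℝ) : ℂ) ≠ 0 := by exact_mod_cast hρpos.ne'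
  -- phase relation
  have hphase : ∀ i j, A i j ≠ 0 →
      ((ρ : ℝ) : ℂ) ^ 2 * ((y i : ℝ) : ℂ) ^ 2 * (x j) ^ 2
        = lam ^ 2 * ((y j : ℝ) : ℂ) ^ 2 * (x i) ^ 2 := by
    intro i j hAij
    have h1 : (∑ k, Bc i k * x k) = lam * x i := by
      calc (∑ k, Bc i k * x k) = (Bc *ᵥ x) i := rfl
        _ = lam * x i := by rw [hx]; rfl
    have hL : ‖∑ k, Bc i k * x k‖ = ρ * y i := by
      rw [h1, norm_mul, hlam]
    have hR : ∑ k, ‖Bc i k * x k‖ = ρ * y i := by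
      have h4 : ∑ k, ‖Bc i k * x k‖ = (A *ᵥ y) i := by
        refine Eq.trans (Finset.sum_congr rfl fun k _ => ?_) rfl
        rw [norm_mul, hAabs]
      rw [h4, heqv i]
    have hTE := triangle_eq Finset.univ (fun k => Bc i k * x k) (by rw [hL, hR])
      j (Finset.mem_univ j)
    rw [hL] at hTE
    have hBabs' : ‖Bc i j * x j‖ = A i j * y j := by
      rw [norm_mul, hAabs]
    rw [hBabs', h1] at hTE
    -- hTE : ↑(ρ * y i) * (Bc i j * x j) = ↑(A i j * y j) * (lam * x i)
    have hB2 : (Bc i j) ^ 2 = ((A i j : ℝ) : ℂ) ^ 2 := by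
      have h5 : |B i j| = A i j := congrFun (congrFun hBabs i) j
      have h6 : (B i j) ^ 2 = (A i j) ^ 2 := by rw [← sq_abs, h5]
      rw [hBc]
      simp only [Matrix.map_apply]
      exact_mod_cast congrArg (fun t : ℝ => (t : ℂ)) h6
    have hA0 : ((A i j : ℝ) : ℂ) ≠ 0 := by exact_mod_cast hAij
    apply mul_left_cancel₀ (pow_ne_zero 2 hA0)
    have hsq : (((ρ * y i : ℝ) : ℂ) * (Bc i j * x j)) ^ 2
        = (((A i j * y j : ℝ) : ℂ) * (lam * x i)) ^ 2 := by rw [hTE]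
    push_cast at hsq ⊢
    linear_combination hsq - ((ρ : ℝ) : ℂ) ^ 2 * ((y i : ℝ) : ℂ) ^ 2 * (x j) ^ 2 * hB2
  -- normalized squared phases
  set γ : ℂ := (lam / ((ρ : ℝ) : ℂ)) ^ 2 with hγdef
  have hγ0 : γ ≠ 0 := pow_ne_zero _ (div_ne_zero hlam0 hρc)
  set E : Fin n → ℂ := fun i => (x i / ((y i : ℝ) : ℂ)) ^ 2 with hE
  have hyc : ∀ i, ((y i : ℝ) : ℂ) ≠ 0 := fun i => by exact_mod_cast (hypos i).ne'
  have hxc : ∀ i, x i ≠ 0 := by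
    intro i h
    have := hypos i
    rw [hy] at this
    simp only [h, norm_zero] at this
    exact lt_irrefl 0 this
  have hE0 : ∀ i, E i ≠ 0 := fun i => pow_ne_zero _ (div_ne_zero (hxc i) (hyc i))
  have hEstep : ∀ i j, A i j ≠ 0 → E j = γ * E i := by
    intro i j hij
    have h := hphase i j hij
    rw [hE, hγdef]
    simp only
    rw [div_pow, div_pow, div_pow, div_mul_div_comm,
      div_eq_div_iff (pow_ne_zero _ (hyc j)) (mul_ne_zero (pow_ne_zero _ hρc) (pow_ne_zero _ (hyc i)))]
    linear_combination h
  have hwalkE : ∀ k i j, HasWalk A i j k → E j = γ ^ k * E i := by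
    intro k
    induction k with
    | zero =>
      intro i j h
      obtain ⟨f, h0, hk, -⟩ := h
      have : i = j := h0 ▸ hk
      subst this; simp
    | succ k ih =>
      intro i j h
      obtain ⟨f, h0, hk, hstep'⟩ := h
      have h1 : HasWalk A i (f k) k := ⟨f, h0, rfl, fun t ht => hstep' t (by omega)⟩
      have h2 : A (f k) j ≠ 0 := by
        have := hstep' k (Nat.lt_succ_self k)
        rwa [hk] at this
      rw [hEstep (f k) j h2, ih i (f k) h1, pow_succ]
      ring
  have hclosed : ∀ k ∈ {k : ℕ | 0 < k ∧ ∃ i, HasWalk A i i k}, γ ^ k = 1 := by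
    rintro k ⟨-, i, hwk⟩
    have h1 := hwalkE k i i hwk
    have h2 : γ ^ k * E i = 1 * E i := by rw [← h1, one_mul]
    exact mul_right_cancel₀ (hE0 i) h2
  -- p is positive
  have hp0 : p ≠ 0 := by
    intro hpz
    obtain ⟨i1⟩ : Nonempty (Fin n) := Fin.pos_iff_nonempty.mp hn
    have h1 : (0 : ℝ) < ∑ j, A i1 j * y j := by
      have : (∑ j, A i1 j * y j) = (A *ᵥ y) i1 := rfl
      rw [this, heqv i1]
      exact mul_pos hρpos (hypos i1)
    obtain ⟨j1, -, hj1⟩ := Finset.exists_ne_zero_of_sum_ne_zero h1.ne'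
    have hA1 : A i1 j1 ≠ 0 := fun h => hj1 (by rw [h, zero_mul])
    have hw1 : HasWalk A i1 j1 1 := by
      refine ⟨fun t => if t = 0 then i1 else j1, rfl, rfl, ?_⟩
      intro t ht
      have : t = 0 := by omega
      subst this
      simpa using hA1
    obtain ⟨k, hwk⟩ := hirr j1 i1
    have hcw := hasWalk_trans hnn hw1 hwk
    have hdvd := hp.1 (1 + k) (by omega) ⟨i1, hcw⟩
    rw [hpz] at hdvd
    omega
  have hγp : γ ^ p = 1 :=
    pow_period_eq_one hγ0 {k : ℕ | 0 < k ∧ ∃ i, HasWalk A i i k}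
      (fun k hk => hp.1 k hk.1 hk.2)
      (fun q hq => hp.2 q (fun k hk1 hk2 => hq k ⟨hk1, hk2⟩)) hclosed
  have hc2p : (lam / ((ρ : ℝ) : ℂ)) ^ (2 * p) = 1 := by
    rw [mul_comm 2 p, pow_mul]
    rw [hγdef] at hγp
    rw [← hγp]
    rw [← pow_mul, ← pow_mul, mul_comm p 2]
  obtain ⟨k, hk1, hk2⟩ := exists_exp_of_pow (Nat.pos_of_ne_zero hp0) hc2p
  refine ⟨k, hk1, ?_⟩
  rw [← hk2, mul_comm, div_mul_cancel₀ lam hρc]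
end

section
/- Let A be an n×n irreducible nonnegative real matrix with period p and spectral radius ρ(A). If λ is a complex eigenvalue of A with |λ| = ρ(A), then λ = ρ(A)·e^{iπk/p} for some integer k with 0 ≤ k ≤ 2p−1. -/
open Matrix Polynomial Filter

attribute [local instance] Matrix.linftyOpNormedRing Matrix.linftyOpNormedAlgebra

section walks
variable {n : ℕ} (A : Matrix (Fin n) (Fin n) ℝ) (hnn : ∀ i j, 0 ≤ A i j)
include hnn

lemma pow_entry_nonneg (k : ℕ) (i j : Fin n) : 0 ≤ (A ^ k) i j := by
  induction k generalizing i j with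
  | zero => by_cases h : i = j <;> simp [pow_zero, Matrix.one_apply, h]
  | succ k ih =>
    rw [pow_succ', Matrix.mul_apply]
    exact Finset.sum_nonneg fun m _ => mul_nonneg (hnn i m) (ih m j)

lemma B_nonneg : ∀ a b, 0 ≤ (1 + A) a b := by
  intro a b
  rcases eq_or_ne a b with rfl | h
  · have := hnn a a
    simp only [Matrix.add_apply, Matrix.one_apply_eq]
    linarith
  · simpa [Matrix.add_apply, Matrix.one_apply_ne h] using hnn a b

omit hnn in
lemma walk_shift {i j : Fin n} {k : ℕ} (h : HasWalk A i j (k+1)) :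
    ∃ m, A i m ≠ 0 ∧ HasWalk A m j k := by
  obtain ⟨f, h0, hk, harc⟩ := h
  refine ⟨f 1, by rw [← h0]; exact harc 0 (Nat.succ_pos _), fun t => f (t+1), rfl, hk, ?_⟩
  intro t ht
  exact harc (t+1) (by omega)

lemma walk_pow_pos {i j : Fin n} {k : ℕ} (h : HasWalk A i j k) : 0 < (A ^ k) i j := by
  induction k generalizing i j with
  | zero =>
    obtain ⟨f, h0, hk, -⟩ := h
    have : i = j := by rw [← h0, ← hk]
    simp [this, pow_zero, Matrix.one_apply]
  | succ k ih =>
    obtain ⟨m, hm, hw⟩ := walk_shift A h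
    rw [pow_succ', Matrix.mul_apply]
    have h1 : 0 < A i m * (A ^ k) m j :=
      mul_pos ((hnn i m).lt_of_ne (Ne.symm hm)) (ih hw)
    exact Finset.sum_pos' (fun l _ => mul_nonneg (hnn i l) (pow_entry_nonneg A hnn k l j))
      ⟨m, Finset.mem_univ m, h1⟩

lemma walk_B_pos {i j : Fin n} {k : ℕ} (h : HasWalk A i j k) :
    0 < ((1 + A) ^ k) i j := by
  induction k generalizing i j with
  | zero =>
    obtain ⟨f, h0, hk, -⟩ := h
    have : i = j := by rw [← h0, ← hk]
    simp [this, pow_zero, Matrix.one_apply]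
  | succ k ih =>
    obtain ⟨m, hm, hw⟩ := walk_shift A h
    rw [pow_succ', Matrix.mul_apply]
    have him : 0 < (1 + A) i m := by
      rcases eq_or_ne i m with rfl | hij
      · have := hnn i i
        simp only [Matrix.add_apply, Matrix.one_apply_eq]
        linarith
      · have := (hnn i m).lt_of_ne (Ne.symm hm)
        simpa [Matrix.add_apply, Matrix.one_apply_ne hij] using this
    exact Finset.sum_pos'
      (fun l _ => mul_nonneg (B_nonneg A hnn i l) (pow_entry_nonneg (1+A) (B_nonneg A hnn) k l j))
      ⟨m, Finset.mem_univ m, mul_pos him (ih hw)⟩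

lemma B_pow_persist {i j : Fin n} {k : ℕ} (h : 0 < ((1 + A) ^ k) i j) :
    0 < ((1 + A) ^ (k+1)) i j := by
  rw [pow_succ, Matrix.mul_apply]
  have hjj : 0 < (1 + A) j j := by
    have := hnn j j
    simp only [Matrix.add_apply, Matrix.one_apply_eq]
    linarith
  exact Finset.sum_pos'
    (fun l _ => mul_nonneg (pow_entry_nonneg (1+A) (B_nonneg A hnn) k i l) (B_nonneg A hnn l j))
    ⟨j, Finset.mem_univ j, mul_pos h hjj⟩

lemma exists_B_pow_pos (hirr : ∀ i j : Fin n, ∃ k, HasWalk A i j k) :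
    ∃ M : ℕ, ∀ i j, 0 < ((1 + A) ^ M) i j := by
  classical
  choose K hK using fun ij : Fin n × Fin n => hirr ij.1 ij.2
  refine ⟨Finset.univ.sup K, fun i j => ?_⟩
  have hbase : 0 < ((1 + A) ^ K (i, j)) i j := walk_B_pos A hnn (hK (i, j))
  have hle : K (i, j) ≤ Finset.univ.sup K := Finset.le_sup (Finset.mem_univ _)
  obtain ⟨m, hm⟩ := Nat.exists_eq_add_of_le hle
  rw [hm]
  clear hm hle
  induction m with
  | zero => simpa using hbase
  | succ m ih => rw [← Nat.add_assoc]; exact B_pow_persist A hnn ih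

end walks

lemma eval_charpoly' {n : ℕ} (M : Matrix (Fin n) (Fin n) ℂ) (μ : ℂ) :
    M.charpoly.eval μ = (μ • (1 : Matrix (Fin n) (Fin n) ℂ) - M).det := by
  rw [Matrix.charpoly, ← Polynomial.coe_evalRingHom, RingHom.map_det]
  congr 1
  ext i j
  rcases eq_or_ne i j with h | h
  · subst h; simp [Matrix.sub_apply, Matrix.smul_apply, Matrix.one_apply]
  · simp [Matrix.charmatrix_apply_ne _ _ _ h, Matrix.sub_apply, Matrix.smul_apply,
      Matrix.one_apply_ne h]

lemma spectrum_mem_roots {n : ℕ} (A' : Matrix (Fin n) (Fin n) ℂ) (μ : ℂ)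
    (h : μ ∈ spectrum ℂ A') : μ ∈ A'.charpoly.roots := by
  rw [spectrum.mem_iff] at h
  have hdet : (μ • (1 : Matrix (Fin n) (Fin n) ℂ) - A').det = 0 := by
    by_contra hd
    exact h (by
      rw [Algebra.algebraMap_eq_smul_one]
      exact (Matrix.isUnit_iff_isUnit_det _).mpr (isUnit_iff_ne_zero.mpr hd))
  rw [Polynomial.mem_roots (Matrix.charpoly_monic A').ne_zero]
  rw [Polynomial.IsRoot, eval_charpoly', hdet]

lemma map_pow_ofReal {n : ℕ} (A : Matrix (Fin n) (Fin n) ℝ) (k : ℕ) :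
    (A ^ k).map Complex.ofReal = (A.map Complex.ofReal) ^ k := by
  induction k with
  | zero =>
    ext i j
    rcases eq_or_ne i j with rfl | h
    · simp [Matrix.one_apply]
    · simp [Matrix.one_apply_ne h]
  | succ k ih =>
    rw [pow_succ, pow_succ, ← ih]
    exact Matrix.map_mul (L := A ^ k) (M := A) (f := Complex.ofRealHom)

lemma cw_bound {n : ℕ} (hn : 0 < n) (A : Matrix (Fin n) (Fin n) ℝ) (hnn : ∀ i j, 0 ≤ A i j)
    (ρ : ℝ) (hρ : ∀ μ : ℂ, μ ∈ (A.map Complex.ofReal).charpoly.roots → ‖μ‖ ≤ ρ)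
    (r : ℝ) (hr : 0 < r) (w : Fin n → ℝ) (hw : ∀ i, 0 < w i)
    (hAw : ∀ i, r * w i ≤ A.mulVec w i) : r ≤ ρ := by
  haveI : Nonempty (Fin n) := ⟨⟨0, hn⟩⟩
  haveI : CompleteSpace (Matrix (Fin n) (Fin n) ℂ) := FiniteDimensional.complete ℂ _
  set A' := A.map Complex.ofReal with hA'
  -- entrywise nonnegativity of powers
  have hpnn : ∀ k i j, 0 ≤ (A ^ k) i j := by
    intro k
    induction k with
    | zero =>
      intro i j
      rcases eq_or_ne i j with rfl | h
      · simp [Matrix.one_apply]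
      · simp [Matrix.one_apply_ne h]
    | succ k ih =>
      intro i j
      rw [pow_succ, Matrix.mul_apply]
      exact Finset.sum_nonneg fun m _ => mul_nonneg (ih i m) (hnn m j)
  -- iterate the vector inequality
  have hk1 : ∀ k i, r ^ k * w i ≤ (A ^ k).mulVec w i := by
    intro k
    induction k with
    | zero => intro i; simp [Matrix.one_mulVec]
    | succ k ih =>
      intro i
      have : (A ^ (k + 1)).mulVec w = A.mulVec ((A ^ k).mulVec w) := by
        rw [Matrix.mulVec_mulVec, pow_succ']
      rw [this]
      have h1 : ∀ j, r ^ k * w j ≤ (A ^ k).mulVec w j := ih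
      calc r ^ (k+1) * w i = r ^ k * (r * w i) := by ring
        _ ≤ r ^ k * A.mulVec w i :=
            mul_le_mul_of_nonneg_left (hAw i) (le_of_lt (pow_pos hr k))
        _ = ∑ j, A i j * (r ^ k * w j) := by
            rw [Matrix.mulVec, dotProduct, Finset.mul_sum]; congr 1; ext j; ring
        _ ≤ ∑ j, A i j * ((A ^ k).mulVec w j) :=
            Finset.sum_le_sum fun j _ => mul_le_mul_of_nonneg_left (h1 j) (hnn i j)
        _ = A.mulVec ((A ^ k).mulVec w) i := rfl
  -- min and max of w
  obtain ⟨i0, -, hi0⟩ := Finset.exists_min_image Finset.univ w ⟨Classical.arbitrary _, Finset.mem_univ _⟩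
  obtain ⟨i1, -, hi1⟩ := Finset.exists_max_image Finset.univ w ⟨Classical.arbitrary _, Finset.mem_univ _⟩
  set wmin := w i0
  set wmax := w i1
  have hwmin : 0 < wmin := hw i0
  have hwmax : 0 < wmax := hw i1
  set c := wmin / wmax with hc
  have hcpos : 0 < c := div_pos hwmin hwmax
  -- norm lower bound
  have hnormge : ∀ k : ℕ, c * r ^ k ≤ ‖A' ^ k‖ := by
    intro k
    have hrow : ∑ j, (A ^ k) i0 j ≤ ‖A' ^ k‖ := by
      have h3 : (∑ j, ‖(A' ^ k) i0 j‖₊) ≤ ‖A' ^ k‖₊ := by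
        rw [Matrix.linfty_opNNNorm_def]
        exact Finset.le_sup (f := fun i => ∑ j, ‖(A' ^ k) i j‖₊) (Finset.mem_univ i0)
      have h4 : ∀ j, ‖(A' ^ k) i0 j‖ = (A ^ k) i0 j := by
        intro j
        rw [← map_pow_ofReal]
        simp only [Matrix.map_apply, Complex.norm_real]
        exact abs_of_nonneg (hpnn k i0 j)
      calc ∑ j, (A ^ k) i0 j = ∑ j, ‖(A' ^ k) i0 j‖ := by
            exact (Finset.sum_congr rfl fun j _ => (h4 j)).symm
        _ ≤ ‖A' ^ k‖ := by
            have h3' := NNReal.coe_le_coe.mpr h3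
            push_cast at h3'
            simpa [coe_nnnorm] using h3'
    have hstep : r ^ k * wmin ≤ wmax * ∑ j, (A ^ k) i0 j := by
      calc r ^ k * wmin ≤ (A ^ k).mulVec w i0 := hk1 k i0
        _ = ∑ j, (A ^ k) i0 j * w j := rfl
        _ ≤ ∑ j, (A ^ k) i0 j * wmax :=
            Finset.sum_le_sum fun j _ => mul_le_mul_of_nonneg_left (hi1 j (Finset.mem_univ j)) (hpnn k i0 j)
        _ = wmax * ∑ j, (A ^ k) i0 j := by rw [Finset.mul_sum]; congr 1; ext j; ring
    rw [hc, div_mul_eq_mul_div, div_le_iff₀ hwmax]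
    calc wmin * r ^ k = r ^ k * wmin := by ring
      _ ≤ wmax * ∑ j, (A ^ k) i0 j := hstep
      _ ≤ ‖A' ^ k‖ * wmax := by nlinarith
  -- spectral radius bound
  have hsr : spectralRadius ℂ A' ≤ ENNReal.ofReal ρ := by
    rw [spectralRadius]
    refine iSup₂_le fun μ hμ => ?_
    have h5 : ‖μ‖ ≤ ρ := hρ μ (spectrum_mem_roots A' μ hμ)
    rw [← enorm_eq_nnnorm, ← ofReal_norm]
    exact ENNReal.ofReal_le_ofReal (by simpa using h5)
  by_contra hcon
  push_neg at hcon
  set ρ' := max ρ 0 with hρ'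
  have hρ'r : ρ' < r := max_lt hcon hr
  set r' := (ρ' + r) / 2 with hr'
  have hr'pos : 0 < r' := by positivity
  have hr'lt : r' < r := by rw [hr']; linarith [hρ'r]
  have hρ'lt : ρ' < r' := by rw [hr']; linarith [hρ'r]
  have hsr2 : spectralRadius ℂ A' < ENNReal.ofReal r' := by
    calc spectralRadius ℂ A' ≤ ENNReal.ofReal ρ := hsr
      _ ≤ ENNReal.ofReal ρ' := ENNReal.ofReal_le_ofReal (le_max_left _ _)
      _ < ENNReal.ofReal r' := by
          rw [ENNReal.ofReal_lt_ofReal_iff hr'pos]; exact hρ'lt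
  have T := spectrum.pow_nnnorm_pow_one_div_tendsto_nhds_spectralRadius A'
  have hev1 : ∀ᶠ k : ℕ in atTop, (‖A' ^ k‖₊ : ENNReal) ^ (1 / (k:ℝ)) < ENNReal.ofReal r' :=
    T.eventually_lt_const hsr2
  have hev2 : ∀ᶠ k : ℕ in atTop, (r' / r) ^ k < c := by
    have : Filter.Tendsto (fun k : ℕ => (r' / r) ^ k) atTop (nhds 0) :=
      tendsto_pow_atTop_nhds_zero_of_lt_one (by positivity) (by rw [div_lt_one hr]; exact hr'lt)
    exact this.eventually_lt_const hcpos
  have hev3 : ∀ᶠ k : ℕ in atTop, 1 ≤ k := Filter.eventually_ge_atTop 1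
  obtain ⟨k, h1, h2, h3⟩ := (hev1.and (hev2.and hev3)).exists
  -- from h1 derive real bound
  have hk0 : (k : ℝ) ≠ 0 := Nat.cast_ne_zero.mpr (by omega)
  have hb1 : (‖A' ^ k‖₊ : ENNReal) < ENNReal.ofReal (r' ^ k) := by
    have := (ENNReal.pow_lt_pow_left_iff (n := k) (by omega)).mpr h1
    rw [← ENNReal.rpow_natCast ((‖A' ^ k‖₊ : ENNReal) ^ (1 / (k:ℝ))) k, ← ENNReal.rpow_mul,
      one_div, inv_mul_cancel₀ hk0, ENNReal.rpow_one] at this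
    rwa [ENNReal.ofReal_pow (le_of_lt hr'pos)]
  have hb2 : ‖A' ^ k‖ < r' ^ k := by
    rw [← enorm_eq_nnnorm, ← ofReal_norm] at hb1
    exact (ENNReal.ofReal_lt_ofReal_iff_of_nonneg (norm_nonneg _)).mp hb1
  have hb3 : c * r ^ k ≤ ‖A' ^ k‖ := hnormge k
  have hb4 : r' ^ k < c * r ^ k := by
    have := h2
    rw [div_pow, div_lt_iff₀ (pow_pos hr k)] at this
    linarith
  linarith

lemma root_eigenvector {n : ℕ} (A' : Matrix (Fin n) (Fin n) ℂ) (lam : ℂ)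
    (h : lam ∈ A'.charpoly.roots) :
    ∃ x : Fin n → ℂ, x ≠ 0 ∧ A'.mulVec x = lam • x := by
  rw [Polynomial.mem_roots', Polynomial.IsRoot, eval_charpoly'] at h
  obtain ⟨x, hx0, hx⟩ := (Matrix.exists_mulVec_eq_zero_iff.mpr h.2)
  refine ⟨x, hx0, ?_⟩
  rw [Matrix.sub_mulVec, Matrix.smul_mulVec, Matrix.one_mulVec, sub_eq_zero] at hx
  exact hx.symm

lemma re_eq_abs_imp {w : ℂ} (h : w.re = ‖w‖) : w = ((‖w‖ : ℝ) : ℂ) := by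
  have h2 : (‖w‖) ^ 2 = w.re ^ 2 + w.im ^ 2 := by
    rw [Complex.sq_norm, Complex.normSq_apply]; ring
  have him2 : w.im ^ 2 = 0 := by rw [← h] at h2; linarith
  have him : w.im = 0 := pow_eq_zero_iff two_ne_zero |>.mp him2
  apply Complex.ext
  · simp [← h]
  · simp [him]

theorem stmt_7 {n : ℕ} (A : Matrix (Fin n) (Fin n) ℝ)
    (hnn : ∀ i j, 0 ≤ A i j) (hirr : MatIrreducible A)
    (p : ℕ) (hp : IsPeriod A p)
    (lam : ℂ) (hmem : lam ∈ spec A) (hlam : ‖lam‖ = specRadius A) :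
    ∃ k : ℕ, k ≤ 2 * p - 1 ∧
      lam = (specRadius A : ℂ) * Complex.exp (Complex.I * Real.pi * k / p) := by
  classical
  -- n is positive
  have hn : 0 < n := by
    rcases Nat.eq_zero_or_pos n with h0 | h; swap
    · exact h
    · exfalso
      subst h0
      have : (A.map Complex.ofReal).charpoly = (Matrix.charmatrix (A.map Complex.ofReal)).det := rfl
      have hch : (A.map Complex.ofReal).charpoly = 1 := by
        rw [this, Matrix.det_isEmpty]
      have hs : spec A = 0 := by simp [spec, hch]
      rw [hs] at hmem
      simp at hmem
  haveI : Nonempty (Fin n) := ⟨⟨0, hn⟩⟩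
  -- all eigenvalues bounded by |lam|
  have hub : ∀ μ : ℂ, μ ∈ (A.map Complex.ofReal).charpoly.roots → ‖μ‖ ≤ ‖lam‖ := by
    intro μ hμ
    rw [hlam]
    have hfin : ({z : ℂ | z ∈ spec A}).Finite := (spec A).finite_toSet
    exact le_csSup (hfin.image _).bddAbove ⟨μ, hμ, rfl⟩
  -- trivial case lam = 0
  rcases eq_or_lt_of_le (norm_nonneg lam) with h0 | hρpos
  · refine ⟨0, Nat.zero_le _, ?_⟩
    have hl0 : lam = 0 := norm_eq_zero.mp h0.symm
    have hsr0 : specRadius A = 0 := by rw [← hlam, ← h0]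
    rw [hl0, hsr0]
    simp

  -- notation
  set ρ : ℝ := ‖lam‖ with hρdef
  obtain ⟨x, hx0, heig⟩ := root_eigenvector (A.map Complex.ofReal) lam hmem
  set z : Fin n → ℝ := fun i => ‖x i‖ with hzdef
  have hznn : ∀ i, 0 ≤ z i := fun i => norm_nonneg _
  obtain ⟨i0, hxi0⟩ : ∃ i, x i ≠ 0 := by
    by_contra hno
    push_neg at hno
    exact hx0 (funext fun i => hno i)
  have hzi0 : 0 < z i0 := norm_pos_iff.mpr hxi0
  -- subinvariance : ρ z ≤ A z
  have hsub : ∀ i, ρ * z i ≤ A.mulVec z i := by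
    intro i
    have h1 : (A.map Complex.ofReal).mulVec x i = lam * x i := by
      rw [heig]; rfl
    have h3 : (A.map Complex.ofReal).mulVec x i = ∑ j, ((A i j : ℝ) : ℂ) * x j := rfl
    have h2 : ρ * z i = ‖∑ j, ((A i j : ℝ) : ℂ) * x j‖ := by
      rw [← h3, h1, norm_mul]
    rw [h2]
    calc ‖∑ j, ((A i j : ℝ) : ℂ) * x j‖
        ≤ ∑ j, ‖((A i j : ℝ) : ℂ) * x j‖ := norm_sum_le _ _
      _ = ∑ j, A i j * z j := by
          refine Finset.sum_congr rfl fun j _ => ?_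
          rw [norm_mul, Complex.norm_real, Real.norm_eq_abs, abs_of_nonneg (hnn i j)]
      _ = A.mulVec z i := rfl
  -- equality A z = ρ z
  have heq : A.mulVec z = ρ • z := by
    by_contra hne
    set y : Fin n → ℝ := fun i => A.mulVec z i - ρ * z i with hydef
    have hynn : ∀ i, 0 ≤ y i := fun i => sub_nonneg.mpr (hsub i)
    obtain ⟨i1, hyi1⟩ : ∃ i, y i ≠ 0 := by
      by_contra hno
      push_neg at hno
      refine hne (funext fun i => ?_)
      have := hno i
      rw [hydef] at this
      simp only [sub_eq_zero] at this
      simpa [Pi.smul_apply, smul_eq_mul] using this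
    have hyi1p : 0 < y i1 := (hynn i1).lt_of_ne (Ne.symm hyi1)
    obtain ⟨M, hM⟩ := exists_B_pow_pos A hnn hirr
    set B := (1 + A) ^ M with hBdef
    have hBnn : ∀ i j, 0 ≤ B i j := fun i j => le_of_lt (hM i j)
    set u := B.mulVec z with hudef
    set v := B.mulVec y with hvdef
    have hupos : ∀ i, 0 < u i := by
      intro i
      exact Finset.sum_pos' (fun j _ => mul_nonneg (hBnn i j) (hznn j))
        ⟨i0, Finset.mem_univ _, mul_pos (hM i i0) hzi0⟩
    have hvpos : ∀ i, 0 < v i := by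
      intro i
      exact Finset.sum_pos' (fun j _ => mul_nonneg (hBnn i j) (hynn j))
        ⟨i1, Finset.mem_univ _, mul_pos (hM i i1) hyi1p⟩
    have hcomm : A * B = B * A :=
      (((Commute.one_right A).add_right (Commute.refl A)).pow_right M).eq
    have hAz : A.mulVec z = ρ • z + y := by
      funext i
      simp only [Pi.add_apply, Pi.smul_apply, smul_eq_mul, hydef]
      ring
    have hAu : A.mulVec u = ρ • u + v := by
      rw [hudef, Matrix.mulVec_mulVec, hcomm, ← Matrix.mulVec_mulVec, hAz,
        Matrix.mulVec_add, Matrix.mulVec_smul]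
    set ε := Finset.univ.inf' Finset.univ_nonempty (fun i => v i / u i) with hεdef
    have hεpos : 0 < ε :=
      (Finset.lt_inf'_iff _).mpr fun i _ => div_pos (hvpos i) (hupos i)
    have hεle : ∀ i, ε * u i ≤ v i := by
      intro i
      have h1 : ε ≤ v i / u i := Finset.inf'_le _ (Finset.mem_univ i)
      rw [le_div_iff₀ (hupos i)] at h1
      linarith
    have hAu2 : ∀ i, (ρ + ε) * u i ≤ A.mulVec u i := by
      intro i
      have := congrFun hAu i
      simp only [Pi.add_apply, Pi.smul_apply, smul_eq_mul] at this
      rw [this]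
      have := hεle i
      ring_nf
      nlinarith [hεle i]
    have hfinal := cw_bound hn A hnn ρ hub (ρ + ε) (by positivity) u hupos hAu2
    linarith
  -- positivity of z
  have hpowz : ∀ k : ℕ, (A ^ k).mulVec z = fun i => ρ ^ k * z i := by
    intro k
    induction k with
    | zero => funext i; simp [Matrix.one_mulVec]
    | succ k ih =>
      funext i
      have h1 : (A ^ (k+1)).mulVec z = A.mulVec ((A ^ k).mulVec z) := by
        rw [Matrix.mulVec_mulVec, ← pow_succ']
      rw [h1, ih]
      have h2 : A.mulVec (fun i => ρ ^ k * z i) i = ρ ^ k * A.mulVec z i := by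
        simp only [Matrix.mulVec, dotProduct, Finset.mul_sum]
        exact Finset.sum_congr rfl fun j _ => by ring
      rw [h2, heq]
      simp only [Pi.smul_apply, smul_eq_mul]
      ring
  have hzpos : ∀ j, 0 < z j := by
    intro j
    obtain ⟨k, hwjk⟩ := hirr j i0
    have h1 : (A ^ k).mulVec z j = ρ ^ k * z j := congrFun (hpowz k) j
    have h2 : (A ^ k) j i0 * z i0 ≤ (A ^ k).mulVec z j := by
      refine Finset.single_le_sum (f := fun l => (A ^ k) j l * z l)
        (fun l _ => mul_nonneg (pow_entry_nonneg A hnn k j l) (hznn l)) (Finset.mem_univ i0)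
    have h3 : 0 < ρ ^ k * z j := by
      calc (0:ℝ) < (A ^ k) j i0 * z i0 := mul_pos (walk_pow_pos A hnn hwjk) hzi0
        _ ≤ (A ^ k).mulVec z j := h2
        _ = ρ ^ k * z j := h1
    nlinarith [pow_pos hρpos k, (hznn j).lt_or_eq]
  have hxne : ∀ i, x i ≠ 0 := fun i => norm_ne_zero_iff.mp (ne_of_gt (hzpos i))
  have hzC : ∀ i, ((z i : ℝ) : ℂ) ≠ 0 := fun i => Complex.ofReal_ne_zero.mpr (ne_of_gt (hzpos i))
  have hρC : ((ρ : ℝ) : ℂ) ≠ 0 := Complex.ofReal_ne_zero.mpr (ne_of_gt hρpos)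
  set η := lam / (ρ : ℂ) with hηdef
  -- arc relation
  have harc : ∀ i j, A i j ≠ 0 →
      x j / ((z j : ℝ) : ℂ) = η * (x i / ((z i : ℝ) : ℂ)) := by
    intro i j hij
    set c : ℂ := lam * x i / ((ρ : ℂ) * ((z i : ℝ) : ℂ)) with hcdef
    have habsc : ‖c‖ = 1 := by
      rw [hcdef, norm_div, norm_mul, norm_mul, Complex.norm_real, Complex.norm_real,
        Real.norm_eq_abs, Real.norm_eq_abs,
        abs_of_pos hρpos, abs_of_pos (hzpos i)]
      have hzz : ‖x i‖ = z i := rfl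
      have hll : ‖lam‖ = ρ := hρdef.symm
      rw [hll, hzz, div_self (ne_of_gt (mul_pos hρpos (hzpos i)))]
    have hsum : ∑ j', ((A i j' : ℝ) : ℂ) * x j' = lam * x i := by
      have h1 := congrFun heig i
      simpa [Matrix.mulVec, dotProduct, Matrix.map_apply, Pi.smul_apply, smul_eq_mul] using h1
    have hcz : c * ((ρ : ℂ) * ((z i : ℝ) : ℂ)) = lam * x i :=
      div_mul_cancel₀ _ (mul_ne_zero hρC (hzC i))
    set g : Fin n → ℂ := fun j' => (starRingEnd ℂ) c * (((A i j' : ℝ) : ℂ) * x j') with hgdef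
    have hcc : c * (starRingEnd ℂ) c = 1 := by
      rw [Complex.mul_conj, Complex.normSq_eq_norm_sq, habsc]
      simp
    have hgsum : ∑ j', g j' = ((ρ * z i : ℝ) : ℂ) := by
      rw [hgdef, ← Finset.mul_sum, hsum, ← hcz]
      push_cast
      calc (starRingEnd ℂ) c * (c * ((ρ:ℂ) * ((z i :ℝ):ℂ)))
          = (c * (starRingEnd ℂ) c) * ((ρ:ℂ) * ((z i :ℝ):ℂ)) := by ring
        _ = (ρ:ℂ) * ((z i :ℝ):ℂ) := by rw [hcc, one_mul]
    have habs_g : ∀ j', ‖g j'‖ = A i j' * z j' := by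
      intro j'
      rw [hgdef]
      simp only [norm_mul, Complex.norm_conj, habsc, Complex.norm_real, Real.norm_eq_abs,
        abs_of_nonneg (hnn i j'), one_mul]
      rfl
    have hre_le : ∀ j', (g j').re ≤ A i j' * z j' := by
      intro j'
      calc (g j').re ≤ ‖g j'‖ := Complex.re_le_norm _
        _ = A i j' * z j' := habs_g j'
    have hsum0 : ∑ j', (A i j' * z j' - (g j').re) = 0 := by
      rw [Finset.sum_sub_distrib]
      have h1 : ∑ j', A i j' * z j' = ρ * z i := by
        have := congrFun heq i
        simpa [Matrix.mulVec, dotProduct, Pi.smul_apply, smul_eq_mul] using this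
      have h2 : ∑ j', (g j').re = ρ * z i := by
        rw [← Complex.re_sum, hgsum, Complex.ofReal_re]
      rw [h1, h2, sub_self]
    have hterm := (Finset.sum_eq_zero_iff_of_nonneg
      (fun j' _ => sub_nonneg.mpr (hre_le j'))).mp hsum0 j (Finset.mem_univ j)
    have h5 : (g j).re = ‖g j‖ := by
      rw [habs_g j]
      linarith [hterm, sub_eq_zero.mp hterm]
    have h6 : g j = ((‖g j‖ : ℝ) : ℂ) := re_eq_abs_imp h5
    have h7 : (starRingEnd ℂ) c * (((A i j : ℝ) : ℂ) * x j)
        = ((A i j : ℝ) : ℂ) * ((z j : ℝ) : ℂ) := by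
      have : g j = ((A i j * z j : ℝ) : ℂ) := by rw [h6, habs_g j]
      rw [hgdef] at this
      simpa [Complex.ofReal_mul] using this
    have hAijC : ((A i j : ℝ) : ℂ) ≠ 0 := Complex.ofReal_ne_zero.mpr hij
    have h8 : (starRingEnd ℂ) c * x j = ((z j : ℝ) : ℂ) := by
      have h7' : ((A i j : ℝ) : ℂ) * ((starRingEnd ℂ) c * x j)
          = ((A i j : ℝ) : ℂ) * ((z j : ℝ) : ℂ) := by
        rw [← h7]; ring
      exact mul_left_cancel₀ hAijC h7'
    have h9 : x j = c * ((z j : ℝ) : ℂ) := by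
      calc x j = (c * (starRingEnd ℂ) c) * x j := by rw [hcc, one_mul]
        _ = c * ((starRingEnd ℂ) c * x j) := by ring
        _ = c * ((z j : ℝ) : ℂ) := by rw [h8]
    rw [h9, hcdef, hηdef]
    field_simp
    rw [mul_div_mul_right _ _ (hzC j)]
  -- closed walks give roots of unity
  have hdne : ∀ i, x i / ((z i : ℝ) : ℂ) ≠ 0 := fun i => div_ne_zero (hxne i) (hzC i)
  have hclosed : ∀ k, 0 < k → (∃ i, HasWalk A i i k) → η ^ k = 1 := by
    rintro k hk ⟨i, f, hf0, hfk, hfarc⟩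
    have hiter : ∀ t, t ≤ k → x (f t) / ((z (f t) : ℝ) : ℂ)
        = η ^ t * (x (f 0) / ((z (f 0) : ℝ) : ℂ)) := by
      intro t ht
      induction t with
      | zero => simp
      | succ t ih =>
        have h1 := harc (f t) (f (t+1)) (hfarc t (by omega))
        rw [h1, ih (by omega)]
        ring
    have h2 := hiter k le_rfl
    rw [hfk, hf0] at h2
    have h3 : η ^ k * (x i / ((z i : ℝ) : ℂ)) = 1 * (x i / ((z i : ℝ) : ℂ)) := by
      rw [one_mul, ← h2]
    exact mul_right_cancel₀ (hdne i) h3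
  -- a closed walk exists
  obtain ⟨a, b, hab⟩ : ∃ i j, A i j ≠ 0 := by
    by_contra hno
    push_neg at hno
    have h1 : A.mulVec z i0 = 0 := by
      simp [Matrix.mulVec, dotProduct, hno]
    have h2 := congrFun heq i0
    rw [h1] at h2
    simp only [Pi.smul_apply, smul_eq_mul] at h2
    nlinarith [mul_pos hρpos hzi0]
  obtain ⟨m, f, hf0, hfm, hfarc⟩ := hirr b a
  have hcw : HasWalk A a a (m+1) := by
    refine ⟨fun t => if t = 0 then a else f (t-1), by simp, by simp [hfm], ?_⟩
    intro t ht
    rcases Nat.eq_zero_or_pos t with rfl | htpos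
    · simpa [hf0] using hab
    · have hne0 : t ≠ 0 := Nat.pos_iff_ne_zero.mp htpos
      have h1 : t - 1 < m := by omega
      have := hfarc (t-1) h1
      have e1 : t - 1 + 1 = t := by omega
      simp only [hne0, if_false, Nat.add_one_ne_zero]
      rw [show t + 1 - 1 = (t - 1) + 1 by omega]
      exact this
  have hppos : 0 < p := by
    rcases Nat.eq_zero_or_pos p with rfl | h
    · have := hp.1 (m+1) (Nat.succ_pos m) ⟨a, hcw⟩
      simp at this
    · exact h
  have hη1 : η ^ (m+1) = 1 := hclosed (m+1) (Nat.succ_pos m) ⟨a, hcw⟩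
  have hdvd : orderOf η ∣ p :=
    hp.2 _ (fun k hk hek => orderOf_dvd_of_pow_eq_one (hclosed k hk hek))
  have hηp : η ^ p = 1 := orderOf_dvd_iff_pow_eq_one.mp hdvd
  haveI : NeZero p := ⟨Nat.pos_iff_ne_zero.mp hppos⟩
  have hprim := Complex.isPrimitiveRoot_exp p (Nat.pos_iff_ne_zero.mp hppos)
  obtain ⟨kk, hkklt, hkk⟩ := hprim.eq_pow_of_pow_eq_one hηp
  refine ⟨2 * kk, by omega, ?_⟩
  have hlam_eq : lam = (ρ : ℂ) * η := by
    rw [hηdef]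
    field_simp
  have hsρ : ((specRadius A : ℝ) : ℂ) = ((ρ : ℝ) : ℂ) := by
    rw [← hlam]
  rw [hlam_eq, hsρ]
  congr 1
  rw [← hkk, ← Complex.exp_nat_mul]
  congr 1
  have hpC : ((p:ℕ) : ℂ) ≠ 0 := Nat.cast_ne_zero.mpr (Nat.pos_iff_ne_zero.mp hppos)
  push_cast
  field_simp
end
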